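/- arXiv:1603.04472 — 10 statements merged into one kernel-verified Lean document; each statement's English description precedes it below -/
import Mathlib

section
/- Let C ⊆ [0,1] be a set, let S be a σ-algebra of subsets of [0,1] such that [c,d] ∩ C ∈ S for all real c, d with 0 ≤ c < d ≤ 1, and let μ be a probability measure on ([0,1], S) such that μ([c,d] ∩ C) = d − c for all real c, d with 0 ≤ c < d ≤ 1. Then the infinite product measure μ^∞ of the set of all sequences (x_k)_{k≥1} ∈ [0,1]^ℕ that are C-uniformly distributed equals 1. -/
open Filter Topology MeasureTheory

/-- A sequence `x` of points of `[0,1]` is `C`-uniformly distributed if for all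
`0 ≤ c < d ≤ 1` the relative frequency of indices `k < n` with `x k ∈ [c,d] ∩ C`
tends to `d - c`. -/
def IsUDSeq (C : Set ℝ) (x : ℕ → ℝ) : Prop :=
  ∀ c d : ℝ, 0 ≤ c → c < d → d ≤ 1 →
    Tendsto (fun n : ℕ => (Set.ncard {k : ℕ | k < n ∧ x k ∈ Set.Icc c d ∩ C} : ℝ) / n)
      atTop (𝓝 (d - c))

/-- Deterministic squeeze: if the relative frequencies converge for all rational
endpoints, they converge for all real endpoints. -/
lemma ud_of_rat {α : Type*} (G : ℝ → ℝ → Set α)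
    (hmono : ∀ c d c' d' : ℝ, c' ≤ c → d ≤ d' → G c d ⊆ G c' d') (f : ℕ → α)
    (h : ∀ q r : ℚ, 0 ≤ (q : ℝ) → (q : ℝ) < r → (r : ℝ) ≤ 1 →
      Tendsto (fun n : ℕ => (Set.ncard {k : ℕ | k < n ∧ f k ∈ G q r} : ℝ) / n)
        atTop (𝓝 ((r : ℝ) - q)))
    (c d : ℝ) (hc : 0 ≤ c) (hcd : c < d) (hd : d ≤ 1) :
    Tendsto (fun n : ℕ => (Set.ncard {k : ℕ | k < n ∧ f k ∈ G c d} : ℝ) / n)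
      atTop (𝓝 (d - c)) := by
  rw [Metric.tendsto_atTop]
  intro ε hε
  set δ := min (ε / 4) ((d - c) / 3) with hδdef
  have hδ : 0 < δ := lt_min (by linarith) (by linarith)
  have hδε : δ ≤ ε / 4 := min_le_left _ _
  have hδdc : δ ≤ (d - c) / 3 := min_le_right _ _
  obtain ⟨q1, hq1a, hq1b, hq1c⟩ : ∃ q1 : ℚ, (q1 : ℝ) ≤ c ∧ 0 ≤ (q1 : ℝ) ∧ c - δ < q1 := by
    rcases eq_or_lt_of_le hc with h0 | h0
    · exact ⟨0, by simp [← h0], by simp, by push_cast; linarith⟩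
    · obtain ⟨q, hq1, hq2⟩ := exists_rat_btwn (show max (c - δ) 0 < c from max_lt (by linarith) h0)
      exact ⟨q, hq2.le, le_trans (le_max_right _ _) hq1.le,
        lt_of_le_of_lt (le_max_left _ _) hq1⟩
  obtain ⟨r1, hr1a, hr1b, hr1c⟩ : ∃ r1 : ℚ, d ≤ (r1 : ℝ) ∧ (r1 : ℝ) ≤ 1 ∧ (r1 : ℝ) < d + δ := by
    rcases eq_or_lt_of_le hd with h1 | h1
    · exact ⟨1, by simp [h1], by simp, by push_cast; linarith⟩
    · obtain ⟨r, hr1, hr2⟩ := exists_rat_btwn (show d < min 1 (d + δ) from lt_min h1 (by linarith))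
      exact ⟨r, hr1.le, le_trans hr2.le (min_le_left _ _),
        lt_of_lt_of_le hr2 (min_le_right _ _)⟩
  obtain ⟨q2, hq2a, hq2b⟩ := exists_rat_btwn (show c < c + δ by linarith)
  obtain ⟨r2, hr2a, hr2b⟩ := exists_rat_btwn (show d - δ < d by linarith)
  have h1 := h q1 r1 hq1b (by linarith) hr1b
  have h2 := h q2 r2 (by linarith) (by linarith) (by linarith)
  rw [Metric.tendsto_atTop] at h1 h2
  obtain ⟨N1, hN1⟩ := h1 δ hδ
  obtain ⟨N2, hN2⟩ := h2 δ hδ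
  refine ⟨max (max N1 N2) 1, fun n hn => ?_⟩
  have hn1 : N1 ≤ n := le_trans (le_trans (le_max_left _ _) (le_max_left _ _)) hn
  have hn2 : N2 ≤ n := le_trans (le_trans (le_max_right _ _) (le_max_left _ _)) hn
  have hnpos : (0 : ℝ) < n := by
    have : (1 : ℕ) ≤ n := le_trans (le_max_right _ _) hn
    exact_mod_cast Nat.lt_of_lt_of_le Nat.zero_lt_one this
  have d1 := hN1 n hn1
  have d2 := hN2 n hn2
  rw [Real.dist_eq, abs_lt] at d1 d2
  obtain ⟨d1l, d1r⟩ := d1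
  obtain ⟨d2l, d2r⟩ := d2
  have m1 : (Set.ncard {k : ℕ | k < n ∧ f k ∈ G c d} : ℝ)
      ≤ (Set.ncard {k : ℕ | k < n ∧ f k ∈ G q1 r1} : ℝ) := by
    have hsub : {k : ℕ | k < n ∧ f k ∈ G c d} ⊆ {k : ℕ | k < n ∧ f k ∈ G q1 r1} :=
      fun k hk => ⟨hk.1, hmono c d q1 r1 hq1a hr1a hk.2⟩
    have hfin : {k : ℕ | k < n ∧ f k ∈ G q1 r1}.Finite :=
      (Set.finite_Iio n).subset fun k hk => hk.1
    exact_mod_cast Set.ncard_le_ncard hsub hfin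
  have m2 : (Set.ncard {k : ℕ | k < n ∧ f k ∈ G q2 r2} : ℝ)
      ≤ (Set.ncard {k : ℕ | k < n ∧ f k ∈ G c d} : ℝ) := by
    have hsub : {k : ℕ | k < n ∧ f k ∈ G q2 r2} ⊆ {k : ℕ | k < n ∧ f k ∈ G c d} :=
      fun k hk => ⟨hk.1, hmono q2 r2 c d hq2a.le hr2b.le hk.2⟩
    have hfin : {k : ℕ | k < n ∧ f k ∈ G c d}.Finite :=
      (Set.finite_Iio n).subset fun k hk => hk.1
    exact_mod_cast Set.ncard_le_ncard hsub hfin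
  have e1 : (Set.ncard {k : ℕ | k < n ∧ f k ∈ G c d} : ℝ) / n
      ≤ (Set.ncard {k : ℕ | k < n ∧ f k ∈ G q1 r1} : ℝ) / n :=
    (div_le_div_iff_of_pos_right hnpos).mpr m1
  have e2 : (Set.ncard {k : ℕ | k < n ∧ f k ∈ G q2 r2} : ℝ) / n
      ≤ (Set.ncard {k : ℕ | k < n ∧ f k ∈ G c d} : ℝ) / n :=
    (div_le_div_iff_of_pos_right hnpos).mpr m2
  rw [Real.dist_eq, abs_lt]
  constructor <;> linarith

/-- Abstract version of the main theorem, for a monotone family `G c d` of measurable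
sets of measure `d - c`. -/
theorem stmt0_aux {α : Type*} [mα : MeasurableSpace α] (G : ℝ → ℝ → Set α)
    (hmono : ∀ c d c' d' : ℝ, c' ≤ c → d ≤ d' → G c d ⊆ G c' d')
    (μ : Measure α) (hprob : μ Set.univ = 1)
    (hmeas : ∀ c d : ℝ, 0 ≤ c → c < d → d ≤ 1 → MeasurableSet (G c d))
    (hval : ∀ c d : ℝ, 0 ≤ c → c < d → d ≤ 1 → μ (G c d) = ENNReal.ofReal (d - c))
    (P : Measure (ℕ → α))
    (hP : ∀ (s : Finset ℕ) (A : ℕ → Set α), (∀ i ∈ s, MeasurableSet (A i)) →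
      P {f | ∀ i ∈ s, f i ∈ A i} = ∏ i ∈ s, μ (A i)) :
    P {f : ℕ → α | ∀ c d : ℝ, 0 ≤ c → c < d → d ≤ 1 →
      Tendsto (fun n : ℕ => (Set.ncard {k : ℕ | k < n ∧ f k ∈ G c d} : ℝ) / n)
        atTop (𝓝 (d - c))} = 1 := by
  classical
  haveI : IsProbabilityMeasure μ := ⟨hprob⟩
  haveI : IsProbabilityMeasure P := ⟨by simpa using hP ∅ (fun _ => ∅) (by simp)⟩
  -- marginals of P are μ
  have hmarg : ∀ i : ℕ, Measure.map (fun f : ℕ → α => f i) P = μ := by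
    intro i
    ext A hA
    rw [Measure.map_apply (measurable_pi_apply i) hA,
      show (fun f : ℕ → α => f i) ⁻¹' A = {f : ℕ → α | ∀ j ∈ ({i} : Finset ℕ), f j ∈ A} by
        ext f; simp,
      hP {i} (fun _ => A) (fun j _ => hA), Finset.prod_singleton]
  -- coordinates are independent
  have hIndep : ProbabilityTheory.iIndepFun (m := fun _ : ℕ => mα) (fun i (f : ℕ → α) => f i) P := by
    rw [ProbabilityTheory.iIndepFun_iff_measure_inter_preimage_eq_mul]
    intro s sets hsets
    rw [show (⋂ i ∈ s, (fun f : ℕ → α => f i) ⁻¹' sets i) = {f | ∀ i ∈ s, f i ∈ sets i} by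
        ext f; simp,
      hP s sets hsets]
    refine Finset.prod_congr rfl fun i hi => ?_
    rw [show (fun f : ℕ → α => f i) ⁻¹' sets i
          = {f : ℕ → α | ∀ j ∈ ({i} : Finset ℕ), f j ∈ sets i} by ext f; simp,
      hP {i} (fun _ => sets i) (fun j _ => hsets i hi), Finset.prod_singleton]
  -- main SLLN step for fixed c, d
  have key : ∀ c d : ℝ, 0 ≤ c → c < d → d ≤ 1 → ∀ᵐ f ∂P,
      Tendsto (fun n : ℕ => (Set.ncard {k : ℕ | k < n ∧ f k ∈ G c d} : ℝ) / n)
        atTop (𝓝 (d - c)) := by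
    intro c d hc hcd hd
    set A := G c d with hA
    have hAm : MeasurableSet A := hmeas c d hc hcd hd
    set g : α → ℝ := A.indicator (fun _ => 1) with hg
    have hgm : Measurable g := measurable_const.indicator hAm
    set X : ℕ → (ℕ → α) → ℝ := fun i f => g (f i) with hX
    have hint : Integrable (X 0) P := by
      have h1 : Integrable g μ := (integrable_const (1 : ℝ)).indicator hAm
      rw [← hmarg 0] at h1
      exact (integrable_map_measure hgm.aestronglyMeasurable
        (measurable_pi_apply 0).aemeasurable).mp h1
    have hindep : Pairwise (Function.onFun (ProbabilityTheory.IndepFun · · P) X) :=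
      fun i j hij => (hIndep.indepFun hij).comp hgm hgm
    have hident : ∀ i, ProbabilityTheory.IdentDistrib (X i) (X 0) P P := by
      intro i
      have h0 : ProbabilityTheory.IdentDistrib (fun f : ℕ → α => f i) (fun f => f 0) P P :=
        ⟨(measurable_pi_apply i).aemeasurable, (measurable_pi_apply 0).aemeasurable,
          by rw [hmarg i, hmarg 0]⟩
      exact h0.comp hgm
    have hslln := ProbabilityTheory.strong_law_ae_real X hint hindep hident
    have hmean : ∫ f, X 0 f ∂P = d - c := by
      have h1 : ∫ f, X 0 f ∂P = ∫ x, g x ∂μ := by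
        rw [← hmarg 0, integral_map (measurable_pi_apply 0).aemeasurable
          hgm.aestronglyMeasurable]
      rw [h1, hg, integral_indicator_const (1 : ℝ) hAm, measureReal_def, hval c d hc hcd hd, smul_eq_mul,
        mul_one, ENNReal.toReal_ofReal (by linarith)]
    rw [hmean] at hslln
    filter_upwards [hslln] with f hf
    have heq : (fun n : ℕ => (Set.ncard {k : ℕ | k < n ∧ f k ∈ G c d} : ℝ) / n)
        = fun n : ℕ => (∑ i ∈ Finset.range n, X i f) / n := by
      funext n
      congr 1
      rw [show {k : ℕ | k < n ∧ f k ∈ A}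
            = ↑((Finset.range n).filter (fun k => f k ∈ A)) by
          ext k; simp [Finset.mem_filter, Finset.mem_range],
        Set.ncard_coe_finset]
      simp only [hX, hg, Set.indicator_apply]
      rw [Finset.sum_boole]
    rw [heq]
    exact hf
  -- intersect over rational endpoints
  have hae : ∀ᵐ f ∂P, ∀ q r : ℚ, 0 ≤ (q : ℝ) → (q : ℝ) < r → (r : ℝ) ≤ 1 →
      Tendsto (fun n : ℕ => (Set.ncard {k : ℕ | k < n ∧ f k ∈ G q r} : ℝ) / n)
        atTop (𝓝 ((r : ℝ) - q)) := by
    rw [ae_all_iff]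
    intro q
    rw [ae_all_iff]
    intro r
    by_cases hqr : 0 ≤ (q : ℝ) ∧ (q : ℝ) < r ∧ (r : ℝ) ≤ 1
    · filter_upwards [key q r hqr.1 hqr.2.1 hqr.2.2] with f hf _ _ _
      exact hf
    · exact Filter.Eventually.of_forall fun f h1 h2 h3 => absurd ⟨h1, h2, h3⟩ hqr
  have hfinal : ∀ᵐ f ∂P, f ∈ {f : ℕ → α | ∀ c d : ℝ, 0 ≤ c → c < d → d ≤ 1 →
      Tendsto (fun n : ℕ => (Set.ncard {k : ℕ | k < n ∧ f k ∈ G c d} : ℝ) / n)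
        atTop (𝓝 (d - c))} := by
    filter_upwards [hae] with f hf
    intro c d hc hcd hd
    exact ud_of_rat G hmono f hf c d hc hcd hd
  set s := {f : ℕ → α | ∀ c d : ℝ, 0 ≤ c → c < d → d ≤ 1 →
      Tendsto (fun n : ℕ => (Set.ncard {k : ℕ | k < n ∧ f k ∈ G c d} : ℝ) / n)
        atTop (𝓝 (d - c))} with hs
  have hc0 : P sᶜ = 0 := ae_iff.mp hfinal
  refine le_antisymm prob_le_one ?_
  calc (1 : ENNReal) = P Set.univ := (measure_univ).symm
    _ ≤ P s + P sᶜ := by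
        rw [← Set.union_compl_self s]; exact measure_union_le _ _
    _ = P s := by rw [hc0, add_zero]

/-- if `C ⊆ [0,1]`, `S` is a σ-algebra on `[0,1]` containing the sets
`[c,d] ∩ C` for `0 ≤ c < d ≤ 1`, and `μ` is a probability measure on `([0,1], S)`
with `μ([c,d] ∩ C) = d - c` for all such `c, d`, then the infinite product measure
`μ^∞` (characterized by its values on cylinder sets; here `P` is any such product
measure on `[0,1]^ℕ` with the product σ-algebra, applied to an arbitrary set via its
outer measure) of the set of all `C`-uniformly distributed sequences equals 1. -/
theorem stmt0 (C : Set ℝ) (hC : C ⊆ Set.Icc 0 1)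
    (S : MeasurableSpace ↥(Set.Icc (0 : ℝ) 1))
    (μ : @Measure ↥(Set.Icc (0 : ℝ) 1) S)
    (hprob : μ Set.univ = 1)
    (hmeas : ∀ c d : ℝ, 0 ≤ c → c < d → d ≤ 1 →
      MeasurableSet[S] {x : ↥(Set.Icc (0 : ℝ) 1) | (x : ℝ) ∈ Set.Icc c d ∩ C})
    (hval : ∀ c d : ℝ, 0 ≤ c → c < d → d ≤ 1 →
      μ {x : ↥(Set.Icc (0 : ℝ) 1) | (x : ℝ) ∈ Set.Icc c d ∩ C} = ENNReal.ofReal (d - c))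
    (P : @Measure (ℕ → ↥(Set.Icc (0 : ℝ) 1))
      (@MeasurableSpace.pi ℕ (fun _ => ↥(Set.Icc (0 : ℝ) 1)) (fun _ => S)))
    (hP : ∀ (s : Finset ℕ) (A : ℕ → Set ↥(Set.Icc (0 : ℝ) 1)),
      (∀ i ∈ s, MeasurableSet[S] (A i)) →
        P {f | ∀ i ∈ s, f i ∈ A i} = ∏ i ∈ s, μ (A i)) :
    P {x : ℕ → ↥(Set.Icc (0 : ℝ) 1) | IsUDSeq C (fun n => (x n : ℝ))} = 1 := by
  exact stmt0_aux (mα := S)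
    (fun c d => {x : ↥(Set.Icc (0 : ℝ) 1) | (x : ℝ) ∈ Set.Icc c d ∩ C})
    (fun c d c' d' hc' hd' x hx => ⟨Set.Icc_subset_Icc hc' hd' hx.1, hx.2⟩)
    μ hprob hmeas hval P hP
end

section
/- Let C ⊆ (0,1) be a set which is everywhere dense in (0,1). Then there exists a sequence (y_n)_{n≥1} of points of [0,1] which is C-uniformly distributed. -/
open Filter Topology

/-- A sequence `x` of points of `[0,1]` is `λ`-uniformly distributed if for all
`0 ≤ c < d ≤ 1` the relative frequency of indices `k < n` with `x k ∈ [c,d]`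
tends to `d - c`. -/
def IsLambdaUDSeq (x : ℕ → ℝ) : Prop :=
  ∀ c d : ℝ, 0 ≤ c → c < d → d ≤ 1 →
    Tendsto (fun n : ℕ => (Set.ncard {k : ℕ | k < n ∧ x k ∈ Set.Icc c d} : ℝ) / n)
      atTop (𝓝 (d - c))


namespace UDAux

def T : ℕ → ℕ
  | 0 => 0
  | m + 1 => T m + (m + 1)

lemma T_succ (m : ℕ) : T (m + 1) = T m + (m + 1) := rfl

lemma T_mono : Monotone T := monotone_nat_of_le_succ fun m => by simp [T_succ]

lemma self_le_T (m : ℕ) : m ≤ T m := by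
  induction m with
  | zero => simp [T]
  | succ n ih => rw [T_succ]; omega

lemma two_T (m : ℕ) : 2 * T m = m * (m + 1) := by
  induction m with
  | zero => simp [T]
  | succ n ih => rw [T_succ]; ring_nf; ring_nf at ih; omega

lemma exists_block (k : ℕ) : ∃ m, k < T (m + 1) := ⟨k, lt_of_lt_of_le (Nat.lt_succ_self k) (self_le_T (k+1))⟩

noncomputable def b (k : ℕ) : ℕ := Nat.find (exists_block k)

lemma b_spec (k : ℕ) : T (b k) ≤ k ∧ k < T (b k + 1) := by
  refine ⟨?_, Nat.find_spec (exists_block k)⟩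
  rcases Nat.eq_zero_or_pos (b k) with h | h
  · simp [h, T]
  · have h2 := Nat.find_min (exists_block k) (m := b k - 1) (show b k - 1 < b k from Nat.sub_lt h one_pos)
    have h3 : T (b k - 1 + 1) ≤ k := Nat.le_of_not_lt h2
    rwa [Nat.sub_add_cancel h] at h3

lemma b_eq (m k : ℕ) (h1 : T m ≤ k) (h2 : k < T (m + 1)) : b k = m := by
  obtain ⟨hl, hr⟩ := b_spec k
  rcases lt_trichotomy (b k) m with h | h | h
  · have := T_mono (show b k + 1 ≤ m by omega); omega
  · exact h
  · have := T_mono (show m + 1 ≤ b k by omega); omega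

lemma le_b (m k : ℕ) (h : T m ≤ k) : m ≤ b k := by
  by_contra hlt
  have := T_mono (show b k + 1 ≤ m by omega)
  have := (b_spec k).2
  omega

lemma b_tendsto : Tendsto b atTop atTop :=
  tendsto_atTop_atTop.2 fun m => ⟨T m, fun n hn => le_b m n hn⟩



lemma cast_sub_ge (a b : ℕ) : (a : ℝ) - b ≤ ((a - b : ℕ) : ℝ) := by
  rcases le_total b a with h | h
  · rw [Nat.cast_sub h]
  · have h1 : a - b = 0 := by omega
    have h2 : (a : ℝ) ≤ b := Nat.cast_le.2 h
    rw [h1]; simpa using by linarith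

lemma cnt_bounds (N : ℕ) (hN : 0 < N) (q : ℕ → ℝ)
    (hq : ∀ j < N, q j ∈ Set.Ioo ((j : ℝ)/N) ((j+1)/N))
    (c d : ℝ) (hc : 0 ≤ c) (hcd : c < d) (hd : d ≤ 1) :
    (N : ℝ) * (d - c) - 2 ≤ (((Finset.range N).filter (fun j => q j ∈ Set.Icc c d)).card : ℝ) ∧
    (((Finset.range N).filter (fun j => q j ∈ Set.Icc c d)).card : ℝ) ≤ (N : ℝ) * (d - c) + 2 := by
  classical
  have hN' : (0:ℝ) < N := Nat.cast_pos.2 hN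
  have hNc0 : (0:ℝ) ≤ (N:ℝ) * c := by positivity
  have hNd0 : (0:ℝ) ≤ (N:ℝ) * d := by nlinarith
  have hfl : (N:ℝ) * d - 1 < (⌊(N:ℝ)*d⌋₊ : ℝ) := Nat.sub_one_lt_floor _
  have hfl' : (⌊(N:ℝ)*d⌋₊ : ℝ) ≤ (N:ℝ) * d := Nat.floor_le hNd0
  have hce : (N:ℝ) * c ≤ (⌈(N:ℝ)*c⌉₊ : ℝ) := Nat.le_ceil _
  have hce' : (⌈(N:ℝ)*c⌉₊ : ℝ) < (N:ℝ) * c + 1 := Nat.ceil_lt_add_one hNc0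
  constructor
  · -- lower bound
    have hsub : Finset.Ico ⌈(N:ℝ)*c⌉₊ ⌊(N:ℝ)*d⌋₊ ⊆
        (Finset.range N).filter (fun j => q j ∈ Set.Icc c d) := by
      intro j hj
      simp only [Finset.mem_Ico] at hj
      have hjc : (N:ℝ) * c ≤ j := Nat.ceil_le.mp hj.1
      have hjd : (j:ℝ) + 1 ≤ (N:ℝ) * d := by
        have : ((j+1 : ℕ) : ℝ) ≤ (⌊(N:ℝ)*d⌋₊ : ℝ) := Nat.cast_le.2 (by omega)
        push_cast at this; linarith
      have hjN : j < N := by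
        have hfN : (⌊(N:ℝ)*d⌋₊ : ℕ) ≤ N := by
          have h1 : (N:ℝ) * d ≤ (N:ℝ) := by nlinarith
          calc ⌊(N:ℝ)*d⌋₊ ≤ ⌊(N:ℝ)⌋₊ := Nat.floor_le_floor h1
            _ = N := Nat.floor_natCast N
        omega
      obtain ⟨hql, hqu⟩ := hq j hjN
      simp only [Finset.mem_filter, Finset.mem_range]
      refine ⟨hjN, ?_, ?_⟩
      · have : c ≤ (j:ℝ)/N := (le_div_iff₀ hN').2 (by linarith)
        linarith
      · have : ((j:ℝ)+1)/N ≤ d := (div_le_iff₀ hN').2 (by linarith)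
        linarith
    have h1 : ⌊(N:ℝ)*d⌋₊ - ⌈(N:ℝ)*c⌉₊ ≤
        ((Finset.range N).filter (fun j => q j ∈ Set.Icc c d)).card := by
      have := Finset.card_le_card hsub
      rwa [Nat.card_Ico] at this
    have h2 := cast_sub_ge ⌊(N:ℝ)*d⌋₊ ⌈(N:ℝ)*c⌉₊
    have h3 : (((⌊(N:ℝ)*d⌋₊ - ⌈(N:ℝ)*c⌉₊ : ℕ)) : ℝ) ≤
        (((Finset.range N).filter (fun j => q j ∈ Set.Icc c d)).card : ℝ) := Nat.cast_le.2 h1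
    linarith
  · -- upper bound
    have hsub : (Finset.range N).filter (fun j => q j ∈ Set.Icc c d) ⊆
        Finset.Ico ⌊(N:ℝ)*c⌋₊ ⌈(N:ℝ)*d⌉₊ := by
      intro j hj
      simp only [Finset.mem_filter, Finset.mem_range, Set.mem_Icc] at hj
      obtain ⟨hjN, hcq, hqd⟩ := hj
      obtain ⟨hql, hqu⟩ := hq j hjN
      have h1 : (j:ℝ) < (N:ℝ) * d := by
        have : (j:ℝ)/N < d := lt_of_lt_of_le hql hqd
        have := (div_lt_iff₀ hN').1 this; linarith
      have h2 : (N:ℝ) * c < (j:ℝ) + 1 := by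
        have : c < ((j:ℝ)+1)/N := lt_of_le_of_lt hcq hqu
        have := (lt_div_iff₀ hN').1 this; linarith
      simp only [Finset.mem_Ico]
      constructor
      · have : (⌊(N:ℝ)*c⌋₊ : ℝ) < (j:ℝ) + 1 := lt_of_le_of_lt (Nat.floor_le hNc0) h2
        exact_mod_cast Nat.lt_succ_iff.mp (by exact_mod_cast this)
      · exact Nat.lt_ceil.2 h1
    have hba : ⌊(N:ℝ)*c⌋₊ ≤ ⌈(N:ℝ)*d⌉₊ := by
      have : (⌊(N:ℝ)*c⌋₊ : ℝ) ≤ (⌈(N:ℝ)*d⌉₊ : ℝ) := by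
        have := Nat.floor_le hNc0
        have := Nat.le_ceil ((N:ℝ)*d)
        nlinarith
      exact_mod_cast this
    have h1 : ((Finset.range N).filter (fun j => q j ∈ Set.Icc c d)).card ≤
        ⌈(N:ℝ)*d⌉₊ - ⌊(N:ℝ)*c⌋₊ := by
      have := Finset.card_le_card hsub
      rwa [Nat.card_Ico] at this
    have h2 : (((Finset.range N).filter (fun j => q j ∈ Set.Icc c d)).card : ℝ) ≤
        (⌈(N:ℝ)*d⌉₊ : ℝ) - (⌊(N:ℝ)*c⌋₊ : ℝ) := by
      rw [← Nat.cast_sub hba]; exact_mod_cast h1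
    have hcu : (⌈(N:ℝ)*d⌉₊ : ℝ) < (N:ℝ)*d + 1 := Nat.ceil_lt_add_one hNd0
    have hfll : (N:ℝ)*c - 1 < (⌊(N:ℝ)*c⌋₊ : ℝ) := Nat.sub_one_lt_floor _
    linarith

end UDAux

set_option maxHeartbeats 1000000 in
/-- if `C ⊆ (0,1)` is everywhere dense in `(0,1)`, then there is a
`C`-uniformly distributed sequence of points of `[0,1]`. -/
theorem stmt2 (C : Set ℝ) (hC : C ⊆ Set.Ioo 0 1)
    (hdense : Set.Ioo (0 : ℝ) 1 ⊆ closure C) :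
    ∃ y : ℕ → ℝ, (∀ n, y n ∈ Set.Icc (0 : ℝ) 1) ∧ IsUDSeq C y := by
  classical
  -- choose a point of C in each subinterval (j/N, (j+1)/N)
  have hp : ∀ N j : ℕ, ∃ x : ℝ, j < N → x ∈ C ∧ x ∈ Set.Ioo ((j:ℝ)/N) (((j:ℝ)+1)/N) := by
    intro N j
    by_cases h : j < N
    · have hN' : (0:ℝ) < N := by
        have : 0 < N := by omega
        exact_mod_cast this
      have hjN : (j:ℝ) + 1 ≤ N := by exact_mod_cast h
      have h0a : (0:ℝ) ≤ (j:ℝ)/N := by positivity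
      have hb1 : ((j:ℝ)+1)/N ≤ 1 := (div_le_one hN').2 hjN
      have hab : (j:ℝ)/N < ((j:ℝ)+1)/N := by
        exact (div_lt_div_iff_of_pos_right hN').2 (by linarith)
      set q : ℝ := ((j:ℝ)/N + ((j:ℝ)+1)/N)/2 with hq
      have hq1 : (j:ℝ)/N < q := by rw [hq]; linarith
      have hq2 : q < ((j:ℝ)+1)/N := by rw [hq]; linarith
      have hq01 : q ∈ Set.Ioo (0:ℝ) 1 := ⟨lt_of_le_of_lt h0a hq1, lt_of_lt_of_le hq2 hb1⟩
      have hcl := hdense hq01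
      rw [mem_closure_iff] at hcl
      obtain ⟨x, hxo, hxC⟩ := hcl (Set.Ioo ((j:ℝ)/N) (((j:ℝ)+1)/N)) isOpen_Ioo ⟨hq1, hq2⟩
      exact ⟨x, fun _ => ⟨hxC, hxo⟩⟩
    · exact ⟨0, fun h' => absurd h' h⟩
  choose p hp using hp
  set y : ℕ → ℝ := fun k => p (UDAux.b k + 1) (k - UDAux.T (UDAux.b k)) with hy
  have hjlt : ∀ k, k - UDAux.T (UDAux.b k) < UDAux.b k + 1 := by
    intro k
    have h1 := (UDAux.b_spec k).1
    have h2 := (UDAux.b_spec k).2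
    rw [UDAux.T_succ] at h2
    omega
  have hyC : ∀ k, y k ∈ C := fun k => (hp _ _ (hjlt k)).1
  have hyq : ∀ m j, j < m + 1 → y (UDAux.T m + j) = p (m+1) j := by
    intro m j hj
    have hb : UDAux.b (UDAux.T m + j) = m :=
      UDAux.b_eq m _ (Nat.le_add_right _ _) (by rw [UDAux.T_succ]; omega)
    simp only [hy, hb, Nat.add_sub_cancel_left]
  refine ⟨y, fun n => Set.mem_Icc_of_Ioo (hC (hyC n)), ?_⟩
  intro c d hc hcd hd1
  set A : ℕ → ℕ := fun n => ((Finset.range n).filter fun k => y k ∈ Set.Icc c d).card with hA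
  have hgoal : ∀ n : ℕ, (Set.ncard {k : ℕ | k < n ∧ y k ∈ Set.Icc c d ∩ C}) = A n := by
    intro n
    have : {k : ℕ | k < n ∧ y k ∈ Set.Icc c d ∩ C} =
        ↑((Finset.range n).filter fun k => y k ∈ Set.Icc c d) := by
      ext k
      simp only [Set.mem_setOf_eq, Finset.coe_filter, Finset.mem_range, Set.mem_inter_iff]
      exact ⟨fun ⟨h1, h2, _⟩ => ⟨h1, h2⟩, fun ⟨h1, h2⟩ => ⟨h1, h2, hyC k⟩⟩
    rw [this, Set.ncard_coe_finset]
  suffices hsuf : Filter.Tendsto (fun n : ℕ => (A n : ℝ) / n) Filter.atTop (nhds (d - c)) by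
    refine hsuf.congr fun n => ?_
    rw [hgoal n]
  -- per-block counts
  set cnt : ℕ → ℕ := fun m => ((Finset.range (m+1)).filter fun j => p (m+1) j ∈ Set.Icc c d).card
    with hcnt
  have hcntb : ∀ m : ℕ, ((m:ℝ)+1) * (d - c) - 2 ≤ (cnt m : ℝ) ∧
      (cnt m : ℝ) ≤ ((m:ℝ)+1) * (d - c) + 2 := by
    intro m
    have := UDAux.cnt_bounds (m+1) (Nat.succ_pos m) (p (m+1))
      (fun j hj => (hp (m+1) j hj).2) c d hc hcd hd1
    push_cast at this ⊢
    exact this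
  -- block sums
  have hsum : ∀ M, A (UDAux.T M) = ∑ m ∈ Finset.range M, cnt m := by
    intro M
    induction M with
    | zero => simp [hA, UDAux.T]
    | succ M ih =>
      rw [Finset.sum_range_succ, ← ih, UDAux.T_succ]
      have hre : Finset.range (UDAux.T M + (M+1)) =
          Finset.range (UDAux.T M) ∪ (Finset.range (M+1)).map (addLeftEmbedding (UDAux.T M)) :=
        Finset.range_add _ _
      have hdisj : Disjoint
          ((Finset.range (UDAux.T M)).filter fun k => y k ∈ Set.Icc c d)
          (((Finset.range (M+1)).map (addLeftEmbedding (UDAux.T M))).filter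
            fun k => y k ∈ Set.Icc c d) := by
        apply Finset.disjoint_filter_filter
        simp only [Finset.disjoint_left, Finset.mem_range, Finset.mem_map,
          addLeftEmbedding_apply]
        rintro a ha ⟨b, _, rfl⟩
        omega
      show ((Finset.range (UDAux.T M + (M+1))).filter fun k => y k ∈ Set.Icc c d).card =
          ((Finset.range (UDAux.T M)).filter fun k => y k ∈ Set.Icc c d).card + cnt M
      rw [hre, Finset.filter_union, Finset.card_union_of_disjoint hdisj, Finset.filter_map,
        Finset.card_map]
      congr 1
      show (((Finset.range (M+1)).filter
          fun j => y (addLeftEmbedding (UDAux.T M) j) ∈ Set.Icc c d)).card = cnt M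
      rw [hcnt]
      apply congrArg
      apply Finset.filter_congr
      intro j hj
      rw [Finset.mem_range] at hj
      simp only [addLeftEmbedding_apply]
      rw [hyq M j hj]
  have hTsum : ∀ M : ℕ, (UDAux.T M : ℝ) = ∑ m ∈ Finset.range M, ((m:ℝ)+1) := by
    intro M
    induction M with
    | zero => simp [UDAux.T]
    | succ M ih => rw [UDAux.T_succ, Finset.sum_range_succ, ← ih]; push_cast; ring
  have hFub : ∀ M : ℕ, (A (UDAux.T M) : ℝ) ≤ (UDAux.T M : ℝ) * (d - c) + 2 * M := by
    intro M
    rw [hsum M]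
    push_cast
    calc (∑ m ∈ Finset.range M, (cnt m : ℝ))
        ≤ ∑ m ∈ Finset.range M, (((m:ℝ)+1) * (d - c) + 2) :=
          Finset.sum_le_sum fun m _ => (hcntb m).2
      _ = (UDAux.T M : ℝ) * (d - c) + 2 * M := by
          rw [Finset.sum_add_distrib, ← Finset.sum_mul, ← hTsum M]
          simp [mul_comm]
  have hFlb : ∀ M : ℕ, (UDAux.T M : ℝ) * (d - c) - 2 * M ≤ (A (UDAux.T M) : ℝ) := by
    intro M
    rw [hsum M]
    push_cast
    calc (UDAux.T M : ℝ) * (d - c) - 2 * M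
        = ∑ m ∈ Finset.range M, (((m:ℝ)+1) * (d - c) - 2) := by
          rw [Finset.sum_sub_distrib, ← Finset.sum_mul, ← hTsum M]
          simp [mul_comm]
      _ ≤ ∑ m ∈ Finset.range M, (cnt m : ℝ) :=
          Finset.sum_le_sum fun m _ => (hcntb m).1
  -- main eventual bound
  have hkey : ∀ n : ℕ, 1 ≤ n → |(A n : ℝ) / n - (d - c)| ≤ 6 / (UDAux.b n : ℝ) := by
    intro n hn
    set M := UDAux.b n with hM
    have hM1 : 1 ≤ M := UDAux.le_b 1 n (by simpa [UDAux.T] using hn)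
    have hTn : UDAux.T M ≤ n := (UDAux.b_spec n).1
    have hnT : n < UDAux.T M + (M + 1) := by
      have := (UDAux.b_spec n).2
      rwa [UDAux.T_succ] at this
    have hAub : A n ≤ A (UDAux.T (M+1)) :=
      Finset.card_le_card (Finset.filter_subset_filter _
        (Finset.range_subset_range.2 (by rw [UDAux.T_succ]; omega)))
    have hAlb : A (UDAux.T M) ≤ A n :=
      Finset.card_le_card (Finset.filter_subset_filter _ (Finset.range_subset_range.2 hTn))
    -- real versions
    have hTnR : (UDAux.T M : ℝ) ≤ n := Nat.cast_le.2 hTn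
    have hnTR : (n : ℝ) < (UDAux.T M : ℝ) + M + 1 := by exact_mod_cast hnT
    have h2T : 2 * (UDAux.T M : ℝ) = M * (M + 1) := by exact_mod_cast UDAux.two_T M
    have hM1R : (1:ℝ) ≤ M := Nat.one_le_cast.2 hM1
    have hn1R : (1:ℝ) ≤ n := Nat.one_le_cast.2 hn
    have hM0 : (0:ℝ) < M := by linarith
    have hn0 : (0:ℝ) < n := by linarith
    have hdc1 : d - c ≤ 1 := by linarith
    have hdc0 : 0 < d - c := by linarith
    have hup : (A n : ℝ) ≤ (n:ℝ) * (d - c) + 3 * ((M:ℝ) + 1) := by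
      have h1 : (A n : ℝ) ≤ (A (UDAux.T (M+1)) : ℝ) := Nat.cast_le.2 hAub
      have h2 := hFub (M+1)
      have h3 : (UDAux.T (M+1) : ℝ) = (UDAux.T M : ℝ) + M + 1 := by
        rw [UDAux.T_succ]; push_cast; ring
      rw [h3] at h2
      push_cast at h2
      nlinarith
    have hlo : (n:ℝ) * (d - c) - 3 * ((M:ℝ) + 1) ≤ (A n : ℝ) := by
      have h1 : (A (UDAux.T M) : ℝ) ≤ (A n : ℝ) := Nat.cast_le.2 hAlb
      have h2 := hFlb M
      nlinarith
    have hεn : 3 * ((M:ℝ) + 1) ≤ (6 / (M:ℝ)) * n := by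
      rw [div_mul_eq_mul_div, le_div_iff₀ hM0]
      nlinarith
    rw [abs_le]
    have e1 : (A n : ℝ) / n ≤ (d - c) + 6 / (M:ℝ) := by
      rw [div_le_iff₀ hn0]
      nlinarith
    have e2 : (d - c) - 6 / (M:ℝ) ≤ (A n : ℝ) / n := by
      rw [le_div_iff₀ hn0]
      nlinarith
    constructor <;> linarith
  have hg : Filter.Tendsto (fun n : ℕ => 6 / (UDAux.b n : ℝ)) Filter.atTop (nhds 0) :=
    (tendsto_const_div_atTop_nhds_zero_nat 6).comp UDAux.b_tendsto
  have h0 : Filter.Tendsto (fun n : ℕ => (A n : ℝ) / n - (d - c)) Filter.atTop (nhds 0) := by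
    apply squeeze_zero_norm' ?_ hg
    filter_upwards [Filter.eventually_ge_atTop 1] with n hn
    simpa [Real.norm_eq_abs] using hkey n hn
  exact tendsto_sub_nhds_zero_iff.mp h0
end

section
/- Let (C_t)_{t∈[0,1]} be a partition of [0,1] (pairwise disjoint sets with union [0,1]) such that each C_t is everywhere dense in (0,1). Then there exists a sequence (y_n)_{n≥1} of points of [0,1] which is λ-uniformly distributed but which is not C_t-uniformly distributed for any t ∈ [0,1]. -/
open Filter Topology

namespace Stmt4Aux

open Finset

def S (m : ℕ) : ℕ := ∑ i ∈ Finset.range m, (i + 1)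

lemma S_succ (m : ℕ) : S (m+1) = S m + (m+1) := Finset.sum_range_succ _ m

lemma S_zero : S 0 = 0 := rfl

lemma S_mono : StrictMono S :=
  strictMono_nat_of_lt_succ (fun n => by rw [S_succ]; omega)

lemma le_S (m : ℕ) : m ≤ S m := by
  induction m with
  | zero => simp [S_zero]
  | succ n ih => rw [S_succ]; omega

lemma two_S (m : ℕ) : 2 * S m = m * (m+1) := by
  induction m with
  | zero => rfl
  | succ n ih => rw [S_succ, Nat.mul_add, ih]; ring

def Mf (n : ℕ) : ℕ := Nat.findGreatest (fun M => S M ≤ n) n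

lemma S_Mf_le (n : ℕ) : S (Mf n) ≤ n :=
  Nat.findGreatest_spec (P := fun M => S M ≤ n) (Nat.zero_le n) (by simp [S_zero])

lemma lt_S_Mf_succ (n : ℕ) : n < S (Mf n + 1) := by
  by_contra h
  push_neg at h
  exact Nat.findGreatest_is_greatest (Nat.lt_succ_self (Mf n)) (le_trans (le_S _) h) h

lemma Mf_eq {i k : ℕ} (h1 : S i ≤ k) (h2 : k < S (i+1)) : Mf k = i := by
  have hle : i ≤ Mf k := Nat.le_findGreatest (le_trans (le_S i) h1) h1
  have hlt : Mf k < i + 1 := by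
    by_contra h
    push_neg at h
    have h3 : S (i+1) ≤ S (Mf k) := S_mono.monotone h
    have h4 := S_Mf_le k
    omega
  omega

lemma card_range_add (a b : ℕ) (P : ℕ → Prop) [DecidablePred P] :
    ((range (a+b)).filter P).card
      = ((range a).filter P).card + ((range b).filter (fun j => P (a+j))).card := by
  have h1 : range (a+b) = range a ∪ Finset.Ico a (a+b) := by
    rw [range_eq_Ico, range_eq_Ico]
    exact (Finset.Ico_union_Ico_eq_Ico (Nat.zero_le a) (Nat.le_add_right a b)).symm
  have h2 : Finset.Ico a (a+b) = (range b).map (addLeftEmbedding a) := by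
    rw [range_eq_Ico, Finset.map_add_left_Ico, Nat.add_zero]
  rw [h1, filter_union, card_union_of_disjoint, h2, Finset.filter_map, card_map]
  · rfl
  · exact disjoint_filter_filter (by rw [range_eq_Ico]; exact Finset.Ico_disjoint_Ico_consecutive 0 a (a+b))

lemma count_blocks (P : ℕ → Prop) [DecidablePred P] (M : ℕ) :
    ((range (S M)).filter P).card
      = ∑ i ∈ range M, ((range (i+1)).filter fun j => P (S i + j)).card := by
  induction M with
  | zero => simp [S_zero]
  | succ n ih => rw [S_succ, card_range_add, ih, sum_range_succ]

lemma count_mono {n n' : ℕ} (h : n ≤ n') (P : ℕ → Prop) [DecidablePred P] :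
    ((range n).filter P).card ≤ ((range n').filter P).card :=
  card_le_card (filter_subset_filter _ (by simpa using range_subset_range.2 h))

lemma count_le_add {n n' : ℕ} (h : n ≤ n') (P : ℕ → Prop) [DecidablePred P] :
    ((range n').filter P).card ≤ ((range n).filter P).card + (n' - n) := by
  obtain ⟨b, rfl⟩ := Nat.exists_eq_add_of_le h
  rw [card_range_add]
  have := card_filter_le (range b) (fun j => P (n+j))
  simp only [card_range] at this
  omega

lemma ncard_setOf (n : ℕ) (P : ℕ → Prop) [DecidablePred P] :
    Set.ncard {k : ℕ | k < n ∧ P k} = ((Finset.range n).filter P).card := by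
  rw [← Set.ncard_coe_finset]
  congr 1
  ext k
  simp [Finset.mem_filter, Finset.mem_range, and_comm]

lemma tendsto_of_abs_sub_le {f g : ℕ → ℝ} {a : ℝ} (h : ∀ᶠ n in atTop, |f n - a| ≤ g n)
    (hg : Tendsto g atTop (𝓝 0)) : Tendsto f atTop (𝓝 a) := by
  have h0 : Tendsto (fun n => f n - a) atTop (𝓝 0) := squeeze_zero_norm' (by simpa using h) hg
  have := h0.add_const a
  simpa using this

lemma sqrt_nat_tendsto : Tendsto (fun n : ℕ => Real.sqrt n) atTop atTop := by
  have h1 : Tendsto Real.sqrt atTop atTop :=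
    tendsto_atTop_atTop.2 fun b => ⟨b^2, fun a ha => by
      nlinarith [Real.sq_sqrt (le_trans (sq_nonneg b) ha), Real.sqrt_nonneg a,
        sq_nonneg (Real.sqrt a - b)]⟩
  exact h1.comp tendsto_natCast_atTop_atTop

lemma const_div_sqrt_tendsto (c : ℝ) :
    Tendsto (fun n : ℕ => c / Real.sqrt n) atTop (𝓝 0) :=
  Tendsto.div_atTop tendsto_const_nhds sqrt_nat_tendsto

lemma block_upper (m : ℕ) (hm : 1 ≤ m) {c d : ℝ} (hc : 0 ≤ c) (hcd : c < d) (_hd : d ≤ 1)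
    (q : ℕ → ℝ) (hq : ∀ j < m, q j ∈ Set.Ioo ((j:ℝ)/m) (((j:ℝ)+1)/m))
    (P : ℕ → Prop) [DecidablePred P] (hP : ∀ j < m, P j → q j ∈ Set.Icc c d) :
    (((range m).filter P).card : ℝ) ≤ (d - c) * m + 2 := by
  have hm0 : (0:ℝ) < m := by exact_mod_cast hm
  set a : ℕ := ⌈c * m⌉₊ - 1 with ha
  set b : ℕ := ⌈d * m⌉₊ with hb
  have hsub : (range m).filter P ⊆ Finset.Ico a b := by
    intro j hj
    simp only [mem_filter, mem_range] at hj
    obtain ⟨hjm, hPj⟩ := hj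
    obtain ⟨hq1, hq2⟩ := hq j hjm
    obtain ⟨hc1, hd1⟩ := hP j hjm hPj
    have h1 : c * m < (j:ℝ) + 1 := by
      have : c < ((j:ℝ)+1)/m := lt_of_le_of_lt hc1 hq2
      calc c * m < (((j:ℝ)+1)/m) * m := by exact (mul_lt_mul_iff_of_pos_right hm0).2 this
        _ = (j:ℝ)+1 := by field_simp
    have h2 : (j:ℝ) < d * m := by
      have : (j:ℝ)/m < d := lt_of_lt_of_le hq1 hd1
      calc (j:ℝ) = ((j:ℝ)/m) * m := by field_simp
        _ < d * m := (mul_lt_mul_iff_of_pos_right hm0).2 this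
    have hjb : j < b := Nat.lt_ceil.2 h2
    have hja : a ≤ j := by
      have : ⌈c * m⌉₊ ≤ j + 1 := Nat.ceil_le.2 (by exact_mod_cast h1.le)
      omega
    exact Finset.mem_Ico.2 ⟨hja, hjb⟩
  have hcard : ((range m).filter P).card ≤ b - a := by
    simpa using Finset.card_le_card hsub
  have hbr : (b:ℝ) ≤ d * m + 1 := (Nat.ceil_lt_add_one (mul_nonneg (by linarith) hm0.le)).le
  have har : c * m - 1 ≤ (a:ℝ) := by
    rcases Nat.eq_zero_or_pos ⌈c * m⌉₊ with h | h
    · have : c * m ≤ 0 := by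
        by_contra hcon
        push_neg at hcon
        have := Nat.ceil_pos.2 hcon
        omega
      have : (a:ℝ) ≥ 0 := Nat.cast_nonneg a
      linarith
    · have : (a:ℝ) = (⌈c * m⌉₊ : ℝ) - 1 := by
        rw [ha]
        push_cast [Nat.cast_sub h]
        ring
      have h2 := Nat.le_ceil (c * m)
      linarith
  rcases le_or_gt a b with hab | hab
  · have : ((b - a : ℕ) : ℝ) = (b:ℝ) - a := by push_cast [Nat.cast_sub hab]; ring
    have hcr : (((range m).filter P).card : ℝ) ≤ (b:ℝ) - a := by
      rw [← this]; exact_mod_cast hcard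
    linarith
  · have : b - a = 0 := by omega
    have hcr : ((range m).filter P).card = 0 := by omega
    rw [hcr]
    have : 0 ≤ (d - c) * m := mul_nonneg (by linarith) hm0.le
    simp
    linarith

lemma block_lower (m : ℕ) (hm : 1 ≤ m) {c d : ℝ} (hc : 0 ≤ c) (hcd : c < d) (hd : d ≤ 1)
    (q : ℕ → ℝ) (hq : ∀ j < m, q j ∈ Set.Ioo ((j:ℝ)/m) (((j:ℝ)+1)/m))
    (P : ℕ → Prop) [DecidablePred P] (hP : ∀ j < m, q j ∈ Set.Icc c d → P j) :
    (d - c) * m - 2 ≤ (((range m).filter P).card : ℝ) := by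
  have hm0 : (0:ℝ) < m := by exact_mod_cast hm
  set a : ℕ := ⌈c * m⌉₊ with ha
  set b : ℕ := ⌊d * m⌋₊ with hb
  have hsub : Finset.Ico a b ⊆ (range m).filter P := by
    intro j hj
    obtain ⟨hja, hjb⟩ := Finset.mem_Ico.1 hj
    have hjm : j < m := by
      have : b ≤ m := by
        rw [hb]
        calc ⌊d * m⌋₊ ≤ ⌊(m:ℝ)⌋₊ := Nat.floor_le_floor (by nlinarith)
          _ = m := Nat.floor_natCast m
      omega
    obtain ⟨hq1, hq2⟩ := hq j hjm
    have h1 : c ≤ (j:ℝ)/m := by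
      have : c * m ≤ (j:ℝ) := le_trans (Nat.le_ceil _) (by exact_mod_cast hja)
      rw [le_div_iff₀ hm0]
      linarith
    have h2 : ((j:ℝ)+1)/m ≤ d := by
      have hj1 : ((j:ℝ)+1) ≤ d * m := by
        have : (j+1 : ℕ) ≤ b := hjb
        have h3 : ((j+1:ℕ):ℝ) ≤ (b:ℝ) := by exact_mod_cast this
        have h4 : (b:ℝ) ≤ d * m := Nat.floor_le (mul_nonneg (by linarith) hm0.le)
        push_cast at h3
        linarith
      rw [div_le_iff₀ hm0]
      linarith
    refine Finset.mem_filter.2 ⟨Finset.mem_range.2 hjm,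
      hP j hjm ⟨le_of_lt (lt_of_le_of_lt h1 hq1), le_of_lt (lt_of_lt_of_le hq2 h2)⟩⟩
  have hcard : b - a ≤ ((range m).filter P).card := by
    simpa using Finset.card_le_card hsub
  have hbr : d * m - 1 < (b:ℝ) := Nat.sub_one_lt_floor (d * m)
  have har : (a:ℝ) < c * m + 1 := Nat.ceil_lt_add_one (by positivity)
  rcases le_or_gt a b with hab | hab
  · have hc2 : ((b - a : ℕ) : ℝ) = (b:ℝ) - a := by push_cast [Nat.cast_sub hab]; ring
    have : (b:ℝ) - a ≤ (((range m).filter P).card : ℝ) := by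
      rw [← hc2]; exact_mod_cast hcard
    linarith
  · have hba : (b:ℝ) + 1 ≤ (a:ℝ) := by exact_mod_cast hab
    have : (d - c) * m < 2 := by nlinarith
    have : (0:ℝ) ≤ (((range m).filter P).card : ℝ) := Nat.cast_nonneg _
    linarith

lemma odd_sum (R : ℕ) : (∑ i ∈ range (2*R), if Odd (i+1) then i+1 else 0) = R^2 := by
  induction R with
  | zero => simp
  | succ n ih =>
    have h : 2*(n+1) = (2*n + 1) + 1 := by ring
    rw [h, Finset.sum_range_succ, Finset.sum_range_succ, ih]
    have h1 : Odd (2*n + 1) := odd_two_mul_add_one n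
    have h2 : ¬ Odd (2*n + 1 + 1) := by simp [Nat.odd_add_one, h1]
    rw [if_pos h1, if_neg h2]
    ring

lemma even_sum (R : ℕ) : (∑ i ∈ range (2*R), if Even (i+1) then i+1 else 0) = R^2 + R := by
  induction R with
  | zero => simp
  | succ n ih =>
    have h : 2*(n+1) = (2*n + 1) + 1 := by ring
    rw [h, Finset.sum_range_succ, Finset.sum_range_succ, ih]
    have h1 : ¬ Even (2*n + 1) := by simp [parity_simps]
    have h2 : Even (2*n + 1 + 1) := by
      refine ⟨n+1, by ring⟩
    rw [if_neg h1, if_pos h2]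
    ring

lemma lim_half₁ : Tendsto (fun R : ℕ => ((R:ℝ)^2) / (2*(R:ℝ)^2 + R)) atTop (𝓝 (1/2)) := by
  apply tendsto_of_abs_sub_le (g := fun R : ℕ => 1/(R:ℝ))
  · filter_upwards [eventually_ge_atTop 1] with R hR
    have hR0 : (1:ℝ) ≤ R := by exact_mod_cast hR
    have hpos : (0:ℝ) < 2*(R:ℝ)^2 + R := by nlinarith
    have h : ((R:ℝ)^2) / (2*(R:ℝ)^2 + R) - 1/2 = -((R:ℝ) / (2*(2*(R:ℝ)^2 + R))) := by
      field_simp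
      ring
    rw [h, abs_neg, abs_of_nonneg (by positivity)]
    rw [div_le_div_iff₀ (by positivity) (by positivity)]
    nlinarith
  · exact tendsto_one_div_atTop_nhds_zero_nat

lemma lim_half₂ : Tendsto (fun R : ℕ => ((R:ℝ)^2 + R) / (2*(R:ℝ)^2 + R)) atTop (𝓝 (1/2)) := by
  apply tendsto_of_abs_sub_le (g := fun R : ℕ => 1/(R:ℝ))
  · filter_upwards [eventually_ge_atTop 1] with R hR
    have hR0 : (1:ℝ) ≤ R := by exact_mod_cast hR
    have hpos : (0:ℝ) < 2*(R:ℝ)^2 + R := by nlinarith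
    have h : ((R:ℝ)^2 + R) / (2*(R:ℝ)^2 + R) - 1/2 = (R:ℝ) / (2*(2*(R:ℝ)^2 + R)) := by
      field_simp
      ring
    rw [h, abs_of_nonneg (by positivity)]
    rw [div_le_div_iff₀ (by positivity) (by positivity)]
    nlinarith
  · exact tendsto_one_div_atTop_nhds_zero_nat

end Stmt4Aux

set_option maxHeartbeats 1000000 in
open Stmt4Aux Finset in
/-- if `(C_t)_{t ∈ [0,1]}` is a partition of `[0,1]` into sets each
everywhere dense in `(0,1)`, then there is a `λ`-uniformly distributed sequence of
points of `[0,1]` which is not `C_t`-uniformly distributed for any `t`. -/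
theorem stmt4 (C : ↥(Set.Icc (0 : ℝ) 1) → Set ℝ)
    (hdisj : ∀ t t', t ≠ t' → C t ∩ C t' = ∅)
    (hunion : (⋃ t, C t) = Set.Icc (0 : ℝ) 1)
    (hdense : ∀ t, Set.Ioo (0 : ℝ) 1 ⊆ closure (C t)) :
    ∃ y : ℕ → ℝ, (∀ n, y n ∈ Set.Icc (0 : ℝ) 1) ∧ IsLambdaUDSeq y ∧
      ∀ t, ¬ IsUDSeq (C t) y := by
  classical
  set t0 : ↥(Set.Icc (0:ℝ) 1) := ⟨0, by norm_num⟩ with ht0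
  set t1 : ↥(Set.Icc (0:ℝ) 1) := ⟨1, by norm_num⟩ with ht1
  have ht01 : t0 ≠ t1 := by
    intro h
    have h2 := congrArg Subtype.val h
    rw [ht0, ht1] at h2
    norm_num at h2
  set cls : ℕ → ↥(Set.Icc (0:ℝ) 1) := fun m => if Odd m then t0 else t1 with hcls
  -- dense choice of points
  have key : ∀ m j : ℕ, j < m →
      ((C (cls m)) ∩ Set.Ioo ((j:ℝ)/(m:ℝ)) (((j:ℝ)+1)/(m:ℝ))).Nonempty := by
    intro m j hj
    have hm0 : (0:ℝ) < m := by
      have : 0 < m := Nat.pos_of_ne_zero (by omega)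
      exact_mod_cast this
    have hjm : (j:ℝ) + 1 ≤ m := by exact_mod_cast Nat.succ_le_of_lt hj
    have hj0 : (0:ℝ) ≤ (j:ℝ)/m := by positivity
    have hj1 : ((j:ℝ)+1)/m ≤ 1 := by
      rw [div_le_one hm0]; linarith
    have hlt : (j:ℝ)/m < ((j:ℝ)+1)/m := by
      apply div_lt_div_of_pos_right _ hm0 <;> try linarith
    set x : ℝ := ((j:ℝ)/m + ((j:ℝ)+1)/m)/2 with hx
    have hx1 : (j:ℝ)/m < x := left_lt_add_div_two.2 hlt
    have hx2 : x < ((j:ℝ)+1)/m := add_div_two_lt_right.2 hlt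
    have hxI : x ∈ Set.Ioo (0:ℝ) 1 := ⟨lt_of_le_of_lt hj0 hx1, lt_of_lt_of_le hx2 hj1⟩
    have hxc : x ∈ closure (C (cls m)) := hdense _ hxI
    obtain ⟨z, hz1, hz2⟩ := mem_closure_iff.1 hxc _ isOpen_Ioo ⟨hx1, hx2⟩
    exact ⟨z, hz2, hz1⟩
  set p : ℕ → ℕ → ℝ := fun m j => if h : j < m then (key m j h).some else 1/2 with hp
  have hpC : ∀ (m j : ℕ), j < m → p m j ∈ C (cls m) := by
    intro m j h
    simp only [hp, dif_pos h]
    exact ((key m j h).some_mem).1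
  have hpI : ∀ (m j : ℕ), j < m → p m j ∈ Set.Ioo ((j:ℝ)/(m:ℝ)) (((j:ℝ)+1)/(m:ℝ)) := by
    intro m j h
    simp only [hp, dif_pos h]
    exact ((key m j h).some_mem).2
  set y : ℕ → ℝ := fun k => p (Mf k + 1) (k - S (Mf k)) with hy
  have hoff : ∀ k, k - S (Mf k) < Mf k + 1 := by
    intro k
    have h1 := S_Mf_le k
    have h2 := lt_S_Mf_succ k
    rw [S_succ] at h2
    omega
  have hyC : ∀ k, y k ∈ C (cls (Mf k + 1)) := fun k => hpC _ _ (hoff k)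
  have hyIcc : ∀ k, y k ∈ Set.Icc (0:ℝ) 1 := by
    intro k
    obtain ⟨h1, h2⟩ := hpI _ _ (hoff k)
    set m := Mf k + 1
    set j := k - S (Mf k)
    have hm0 : (0:ℝ) < (m:ℝ) := by exact_mod_cast Nat.succ_pos _
    have hjm : (j:ℝ) + 1 ≤ (m:ℝ) := by exact_mod_cast Nat.succ_le_of_lt (hoff k)
    constructor
    · have : (0:ℝ) ≤ (j:ℝ)/(m:ℝ) := by positivity
      exact le_of_lt (lt_of_le_of_lt this h1)
    · have : ((j:ℝ)+1)/(m:ℝ) ≤ 1 := by rw [div_le_one hm0]; linarith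
      exact le_of_lt (lt_of_lt_of_le h2 this)
  have hyblock : ∀ i j, j < i + 1 → y (S i + j) = p (i+1) j := by
    intro i j hj
    have hM : Mf (S i + j) = i := Mf_eq (Nat.le_add_right _ _) (by rw [S_succ]; omega)
    simp only [hy, hM, Nat.add_sub_cancel_left]
  refine ⟨y, hyIcc, ?_, ?_⟩
  · -- λ-uniformly distributed
    intro c d hc hcd hd
    set P : ℕ → Prop := fun k => y k ∈ Set.Icc c d with hP
    set F : ℕ → ℕ := fun n => ((range n).filter P).card with hF
    have hconv : (fun n : ℕ => (Set.ncard {k : ℕ | k < n ∧ y k ∈ Set.Icc c d} : ℝ)/n)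
        = fun n : ℕ => (F n : ℝ)/(n:ℝ) := by
      funext n
      simp only [hF]
      rw [ncard_setOf n P]
    rw [hconv]
    have hSMcast : ∀ M : ℕ, ((S M : ℕ) : ℝ) = ∑ i ∈ range M, ((i:ℝ)+1) := by
      intro M
      rw [S]
      push_cast
      rfl
    have hfull : ∀ M : ℕ,
        (d - c) * (S M : ℝ) - 2*M ≤ (F (S M) : ℝ) ∧ (F (S M) : ℝ) ≤ (d - c) * (S M : ℝ) + 2*M := by
      intro M
      have hcount : F (S M) = ∑ i ∈ range M, ((range (i+1)).filter fun j => P (S i + j)).card :=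
        count_blocks P M
      have hcast : (F (S M) : ℝ)
          = ∑ i ∈ range M, ((((range (i+1)).filter fun j => P (S i + j)).card : ℕ) : ℝ) := by
        rw [hcount]
        push_cast
        rfl
      have hblkl : ∀ i ∈ range M,
          (d - c) * ((i:ℝ)+1) - 2 ≤ ((((range (i+1)).filter fun j => P (S i + j)).card : ℕ) : ℝ) := by
        intro i _
        have := block_lower (i+1) (Nat.le_add_left 1 i) hc hcd hd (fun j => p (i+1) j)
          (fun j hj => hpI (i+1) j hj)
          (fun j => P (S i + j))
          (fun j hj hIcc => by
            simp only [hP]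
            rw [hyblock i j hj]
            exact hIcc)
        push_cast at this ⊢
        linarith
      have hblku : ∀ i ∈ range M,
          ((((range (i+1)).filter fun j => P (S i + j)).card : ℕ) : ℝ) ≤ (d - c) * ((i:ℝ)+1) + 2 := by
        intro i _
        have := block_upper (i+1) (Nat.le_add_left 1 i) hc hcd hd (fun j => p (i+1) j)
          (fun j hj => hpI (i+1) j hj)
          (fun j => P (S i + j))
          (fun j hj hPj => by
            have : y (S i + j) ∈ Set.Icc c d := hPj
            rwa [hyblock i j hj] at this)
        push_cast at this ⊢
        linarith
      constructor
      · rw [hcast]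
        calc (d - c) * (S M : ℝ) - 2*M
            = ∑ i ∈ range M, ((d - c) * ((i:ℝ)+1) - 2) := by
              rw [Finset.sum_sub_distrib, ← Finset.mul_sum, ← hSMcast M, Finset.sum_const,
                card_range, nsmul_eq_mul]
              ring
          _ ≤ _ := Finset.sum_le_sum hblkl
      · rw [hcast]
        calc (∑ i ∈ range M, ((((range (i+1)).filter fun j => P (S i + j)).card : ℕ) : ℝ))
            ≤ ∑ i ∈ range M, ((d - c) * ((i:ℝ)+1) + 2) := Finset.sum_le_sum hblku
          _ = (d - c) * (S M : ℝ) + 2*M := by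
              rw [Finset.sum_add_distrib, ← Finset.mul_sum, ← hSMcast M, Finset.sum_const,
                card_range, nsmul_eq_mul]
              ring
    have hkey : ∀ n : ℕ, 1 ≤ n → |(F n : ℝ)/(n:ℝ) - (d - c)| ≤ 7 / Real.sqrt n := by
      intro n hn
      set M := Mf n with hM
      have hS1 : S M ≤ n := S_Mf_le n
      have hS2 : n < S M + (M + 1) := by
        have := lt_S_Mf_succ n
        rwa [S_succ] at this
      have hmono : F (S M) ≤ F n := count_mono hS1 P
      have hadd : F n ≤ F (S M) + (n - S M) := count_le_add hS1 P
      have hnSM : n - S M ≤ M := by omega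
      obtain ⟨hl, hu⟩ := hfull M
      have hn0 : (0:ℝ) < n := by exact_mod_cast hn
      have hL1 : d - c ≤ 1 := by linarith
      have hL0 : (0:ℝ) < d - c := by linarith
      have hSMn : (S M : ℝ) ≤ (n:ℝ) := by exact_mod_cast hS1
      have hSMn2 : (n:ℝ) < (S M : ℝ) + (M:ℝ) + 1 := by
        have : (n:ℝ) < ((S M + (M+1) : ℕ) : ℝ) := by exact_mod_cast hS2
        push_cast at this
        linarith
      have hFu : (F n : ℝ) ≤ (d - c)*(n:ℝ) + 3*(M:ℝ) := by
        have h1 : (F n : ℝ) ≤ (F (S M) : ℝ) + ((n - S M : ℕ) : ℝ) := by exact_mod_cast hadd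
        have h2 : ((n - S M : ℕ) : ℝ) ≤ (M:ℝ) := by exact_mod_cast hnSM
        have h3 : (d - c)*(S M : ℝ) ≤ (d - c)*(n:ℝ) := by nlinarith
        linarith
      have hFl : (d - c)*(n:ℝ) - (3*(M:ℝ) + 1) ≤ (F n : ℝ) := by
        have h1 : (F (S M) : ℝ) ≤ (F n : ℝ) := by exact_mod_cast hmono
        have h3 : (d - c)*(n:ℝ) - (d - c)*((M:ℝ)+1) ≤ (d - c)*(S M : ℝ) := by nlinarith
        have h4 : (d - c)*((M:ℝ)+1) ≤ (M:ℝ)+1 := by nlinarith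
        linarith
      have hMsq : (M:ℝ) ≤ Real.sqrt (2*(n:ℝ)) := by
        have h1 : M * M ≤ 2 * n := by
          have h2 := two_S M
          have h3 : M * M ≤ M * (M+1) := Nat.mul_le_mul_left M (Nat.le_succ M)
          omega
        have h2 : (M:ℝ)^2 ≤ 2*(n:ℝ) := by
          have : ((M*M : ℕ):ℝ) ≤ ((2*n : ℕ):ℝ) := by exact_mod_cast h1
          push_cast at this
          nlinarith
        exact (Real.le_sqrt (Nat.cast_nonneg M) (by positivity)).2 h2
      have hsq0 : (0:ℝ) < Real.sqrt n := Real.sqrt_pos.2 hn0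
      have hsq1 : (1:ℝ) ≤ Real.sqrt n := by
        rw [show (1:ℝ) = Real.sqrt 1 from (Real.sqrt_one).symm]
        exact Real.sqrt_le_sqrt (by exact_mod_cast hn)
      have hsq2 : Real.sqrt (2*(n:ℝ)) ≤ 2 * Real.sqrt n := by
        rw [Real.sqrt_mul (by norm_num) (n:ℝ)]
        have h2 : Real.sqrt 2 ≤ 2 := by
          nlinarith [Real.sq_sqrt (show (0:ℝ) ≤ 2 by norm_num), Real.sqrt_nonneg 2]
        nlinarith [Real.sqrt_nonneg (n:ℝ)]
      have hnum : |(F n : ℝ) - (d - c)*(n:ℝ)| ≤ 7 * Real.sqrt n := by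
        have h1 : |(F n : ℝ) - (d - c)*(n:ℝ)| ≤ 3*(M:ℝ) + 1 :=
          abs_le.2 ⟨by linarith, by linarith⟩
        have h2 : 3*(M:ℝ) + 1 ≤ 3*(2*Real.sqrt n) + 1 := by linarith
        linarith
      have heq : (F n : ℝ)/(n:ℝ) - (d - c) = ((F n : ℝ) - (d - c)*(n:ℝ))/(n:ℝ) := by
        field_simp
      rw [heq, abs_div, abs_of_pos hn0, div_le_div_iff₀ hn0 hsq0]
      have hnn : Real.sqrt n * Real.sqrt n = (n:ℝ) := Real.mul_self_sqrt hn0.le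
      nlinarith [abs_nonneg ((F n : ℝ) - (d - c)*(n:ℝ))]
    apply tendsto_of_abs_sub_le (g := fun n : ℕ => 7 / Real.sqrt n)
    · filter_upwards [eventually_ge_atTop 1] with n hn using hkey n hn
    · exact const_div_sqrt_tendsto 7
  · -- not C t -uniformly distributed for any t
    intro t hUD
    have h1 := hUD 0 1 le_rfl one_pos le_rfl
    rw [show (1:ℝ) - 0 = 1 by ring] at h1
    set Q : ℕ → Prop := fun k => y k ∈ Set.Icc (0:ℝ) 1 ∩ C t with hQ
    set G : ℕ → ℕ := fun n => ((range n).filter Q).card with hG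
    have h1' : Tendsto (fun n : ℕ => (G n : ℝ)/(n:ℝ)) atTop (𝓝 1) := by
      have hconv : (fun n : ℕ => (Set.ncard {k : ℕ | k < n ∧ y k ∈ Set.Icc (0:ℝ) 1 ∩ C t} : ℝ)/n)
          = fun n : ℕ => (G n : ℝ)/(n:ℝ) := by
        funext n
        simp only [hG]
        rw [ncard_setOf n Q]
      rwa [hconv] at h1
    have hQiff : ∀ k, Q k ↔ t = cls (Mf k + 1) := by
      intro k
      constructor
      · rintro ⟨-, hk⟩
        by_contra hne
        have hD := hdisj t _ hne
        have : y k ∈ C t ∩ C (cls (Mf k + 1)) := ⟨hk, hyC k⟩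
        rw [hD] at this
        exact this
      · rintro rfl
        exact ⟨hyIcc k, hyC k⟩
    have hGsum : ∀ R : ℕ, G (S (2*R)) = ∑ i ∈ range (2*R), if t = cls (i+1) then i+1 else 0 := by
      intro R
      simp only [hG]
      rw [count_blocks Q (2*R)]
      apply Finset.sum_congr rfl
      intro i _
      have hrw : (range (i+1)).filter (fun j => Q (S i + j))
          = (range (i+1)).filter (fun _ => t = cls (i+1)) := by
        apply Finset.filter_congr
        intro j hj
        have hjlt := Finset.mem_range.1 hj
        have hM : Mf (S i + j) = i := Mf_eq (Nat.le_add_right _ _) (by rw [S_succ]; omega)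
        rw [hQiff (S i + j), hM]
      rw [hrw]
      by_cases h : t = cls (i+1)
      · rw [if_pos h, Finset.filter_true_of_mem (fun _ _ => h), card_range]
      · rw [if_neg h, Finset.filter_false_of_mem (fun _ _ => h), card_empty]
    have hcls_mem : ∀ m, cls m = t0 ∨ cls m = t1 := by
      intro m
      simp only [hcls]
      by_cases h : Odd m
      · left; rw [if_pos h]
      · right; rw [if_neg h]
    have hScast : ∀ R : ℕ, ((S (2*R) : ℕ) : ℝ) = 2*(R:ℝ)^2 + R := by
      intro R
      have h2 := two_S (2*R)
      have h3 : (2:ℝ) * ((S (2*R) : ℕ) : ℝ) = (2*(R:ℝ)) * (2*(R:ℝ)+1) := by exact_mod_cast h2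
      nlinarith [h3]
    have hgmono : Tendsto (fun R : ℕ => S (2*R)) atTop atTop := by
      have hsm : StrictMono (fun R : ℕ => S (2*R)) := fun a b hab => S_mono (by omega)
      exact hsm.tendsto_atTop
    have hcomp := h1'.comp hgmono
    -- three cases
    rcases eq_or_ne t t0 with rfl | hne0
    · -- t = t0 : odd blocks
      have hGval : ∀ R : ℕ, G (S (2*R)) = R^2 := by
        intro R
        rw [hGsum R, ← odd_sum R]
        apply Finset.sum_congr rfl
        intro i _
        by_cases h : Odd (i+1)
        · simp [hcls, h]
        · simp [hcls, h, ht01]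
      have hlim : Tendsto (fun R : ℕ => ((R:ℝ)^2) / (2*(R:ℝ)^2 + R)) atTop (𝓝 1) := by
        apply hcomp.congr
        intro R
        simp only [Function.comp_apply]
        rw [hGval R, hScast R]
        push_cast
        ring_nf
      have := tendsto_nhds_unique hlim lim_half₁
      norm_num at this
    rcases eq_or_ne t t1 with rfl | hne1
    · -- t = t1 : even blocks
      have hGval : ∀ R : ℕ, G (S (2*R)) = R^2 + R := by
        intro R
        rw [hGsum R, ← even_sum R]
        apply Finset.sum_congr rfl
        intro i _
        by_cases h : Odd (i+1)
        · have h2 : ¬ Even (i+1) := by simpa [Nat.not_even_iff_odd] using h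
          simp [hcls, h, h2, Ne.symm ht01]
        · have h2 : Even (i+1) := Nat.not_odd_iff_even.1 h
          simp [hcls, h, h2]
      have hlim : Tendsto (fun R : ℕ => ((R:ℝ)^2 + R) / (2*(R:ℝ)^2 + R)) atTop (𝓝 1) := by
        apply hcomp.congr
        intro R
        simp only [Function.comp_apply]
        rw [hGval R, hScast R]
        push_cast
        ring_nf
      have := tendsto_nhds_unique hlim lim_half₂
      norm_num at this
    · -- t ∉ {t0, t1} : no hits at all
      have hQf : ∀ k, ¬ Q k := by
        intro k hQk
        rcases hcls_mem (Mf k + 1) with h | h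
        · exact hne0 (by rw [(hQiff k).1 hQk, h])
        · exact hne1 (by rw [(hQiff k).1 hQk, h])
      have hG0 : ∀ n, G n = 0 := by
        intro n
        simp only [hG]
        rw [Finset.filter_false_of_mem (fun k _ => hQf k), card_empty]
      have h0 : Tendsto (fun n : ℕ => (G n : ℝ)/(n:ℝ)) atTop (𝓝 0) := by
        apply Tendsto.congr (f₁ := fun _ : ℕ => (0:ℝ))
        · intro n; rw [hG0 n]; simp
        · exact tendsto_const_nhds
      have := tendsto_nhds_unique h1' h0
      norm_num at this
end

section
/- Let (C_t)_{t∈[0,1]} be a family of pairwise disjoint subsets of [0,1] such that each C_t is everywhere dense in (0,1). Then for every t ∈ [0,1] there exists a sequence (y_n)_{n≥1} of points of [0,1] which is C_t-uniformly distributed (and hence λ-uniformly distributed) but which is not C_s-uniformly distributed for any s ∈ [0,1] with s ≠ t. -/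
open Filter Topology
open scoped Classical

private def triN : ℕ → ℕ
  | 0 => 0
  | M + 1 => triN M + (M + 1)

private def blkP : ℕ → ℕ × ℕ
  | 0 => (0, 0)
  | k + 1 =>
    let p := blkP k
    if p.2 < p.1 then (p.1, p.2 + 1) else (p.1 + 1, 0)

private lemma blkP_succ (k : ℕ) :
    blkP (k + 1) = if (blkP k).2 < (blkP k).1 then ((blkP k).1, (blkP k).2 + 1)
      else ((blkP k).1 + 1, 0) := rfl

private lemma blkP_spec : ∀ k, (blkP k).2 ≤ (blkP k).1 ∧ k = triN (blkP k).1 + (blkP k).2 := by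
  intro k
  induction k with
  | zero => simp [blkP, triN]
  | succ k ih =>
    obtain ⟨h1, h2⟩ := ih
    by_cases h : (blkP k).2 < (blkP k).1
    · rw [blkP_succ, if_pos h]
      refine ⟨h, ?_⟩
      show k + 1 = triN (blkP k).1 + ((blkP k).2 + 1)
      omega
    · have he : (blkP k).2 = (blkP k).1 := le_antisymm h1 (not_lt.1 h)
      rw [blkP_succ, if_neg h]
      refine ⟨Nat.zero_le _, ?_⟩
      show k + 1 = triN ((blkP k).1 + 1) + 0
      simp only [triN]
      omega

private lemma blkP_fst_mono : Monotone fun k => (blkP k).1 := by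
  apply monotone_nat_of_le_succ
  intro k
  rw [blkP_succ]
  split <;> simp

private lemma blkP_tri_add : ∀ M, ∀ j ≤ M, blkP (triN M + j) = (M, j) := by
  intro M
  induction M with
  | zero =>
    intro j hj
    have : j = 0 := Nat.le_zero.mp hj
    subst this
    rfl
  | succ M ih =>
    have base : blkP (triN (M + 1)) = (M + 1, 0) := by
      have h1 : blkP (triN M + M) = (M, M) := ih M le_rfl
      have h2 : triN (M + 1) = (triN M + M) + 1 := by simp only [triN]; omega
      rw [h2, blkP_succ, h1]
      simp
    have inner : ∀ j, j ≤ M + 1 → blkP (triN (M + 1) + j) = (M + 1, j) := by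
      intro j
      induction j with
      | zero => intro _; simpa using base
      | succ j ihj =>
        intro hj
        have hjj := ihj (Nat.le_of_succ_le hj)
        have h3 : triN (M + 1) + (j + 1) = (triN (M + 1) + j) + 1 := rfl
        rw [h3, blkP_succ, hjj]
        have : j < M + 1 := hj
        simp [this]
    exact inner

private lemma cardA (s : Finset ℕ) (x z : ℝ) (hxz : x ≤ z)
    (h : ∀ j ∈ s, x ≤ (j : ℝ) ∧ (j : ℝ) ≤ z) : (s.card : ℝ) ≤ z - x + 1 := by
  have hsub : s.image (fun j : ℕ => (j : ℤ)) ⊆ Finset.Icc ⌈x⌉ ⌊z⌋ := by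
    intro i hi
    simp only [Finset.mem_image] at hi
    obtain ⟨j, hj, rfl⟩ := hi
    obtain ⟨h1, h2⟩ := h j hj
    simp only [Finset.mem_Icc]
    refine ⟨Int.ceil_le.2 (by exact_mod_cast h1), Int.le_floor.2 (by exact_mod_cast h2)⟩
  have hcard : s.card ≤ (Finset.Icc ⌈x⌉ ⌊z⌋).card := by
    rw [← Finset.card_image_of_injective s (Nat.cast_injective (R := ℤ))]
    exact Finset.card_le_card hsub
  rw [Int.card_Icc] at hcard
  rcases le_or_gt (⌊z⌋ + 1 - ⌈x⌉) 0 with h0 | h0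
  · have : (⌊z⌋ + 1 - ⌈x⌉).toNat = 0 := Int.toNat_of_nonpos h0
    rw [this] at hcard
    have : s.card = 0 := Nat.le_zero.mp hcard
    rw [this]
    simp
    linarith
  · have he : ((⌊z⌋ + 1 - ⌈x⌉).toNat : ℤ) = ⌊z⌋ + 1 - ⌈x⌉ := Int.toNat_of_nonneg h0.le
    have hc : (s.card : ℝ) ≤ ((⌊z⌋ : ℝ) + 1 - ⌈x⌉) := by
      have := (Nat.cast_le (α := ℝ)).2 hcard
      rw [show (((⌊z⌋ + 1 - ⌈x⌉).toNat : ℕ) : ℝ) = ((⌊z⌋ : ℝ) + 1 - ⌈x⌉) by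
        exact_mod_cast congrArg (fun i : ℤ => (i : ℝ)) he] at this
      exact this
    have := Int.floor_le z
    have := Int.le_ceil x
    linarith

private lemma cardB (N : ℕ) (x z : ℝ) (hx : 0 < x) (hz : z < N + 1)
    (P : ℕ → Prop) [DecidablePred P]
    (h : ∀ j < N, x ≤ (j : ℝ) + 1 → (j : ℝ) + 1 ≤ z → P j) :
    z - x - 1 ≤ (((Finset.range N).filter P).card : ℝ) := by
  rcases lt_or_ge z x with hzx | hzx
  · have : z - x - 1 < 0 := by linarith
    exact this.le.trans (by positivity)
  · have hcx : 1 ≤ ⌈x⌉ := by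
      have : (0 : ℤ) < ⌈x⌉ := Int.ceil_pos.2 hx
      omega
    have key : ((Finset.Icc ⌈x⌉ ⌊z⌋).image fun i => (i - 1).toNat) ⊆
        (Finset.range N).filter P := by
      intro j hj
      simp only [Finset.mem_image, Finset.mem_Icc] at hj
      obtain ⟨i, ⟨hi1, hi2⟩, rfl⟩ := hj
      have hi1' : 1 ≤ i := le_trans hcx hi1
      have hji : ((i - 1).toNat : ℤ) = i - 1 := Int.toNat_of_nonneg (by omega)
      have hxi : x ≤ (i : ℝ) := le_trans (Int.le_ceil x) (by exact_mod_cast hi1)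
      have hiz : (i : ℝ) ≤ z := le_trans (by exact_mod_cast hi2) (Int.floor_le z)
      have hiN : i ≤ (N : ℤ) := by
        have : (i : ℝ) < (N : ℝ) + 1 := lt_of_le_of_lt hiz hz
        exact_mod_cast Int.lt_add_one_iff.mp (by exact_mod_cast this)
      have hjN : (i - 1).toNat < N := by omega
      have hcast : ((i - 1).toNat : ℝ) + 1 = (i : ℝ) := by
        have : (((i - 1).toNat : ℤ) : ℝ) = (i : ℝ) - 1 := by exact_mod_cast hji
        push_cast at this ⊢
        linarith
      simp only [Finset.mem_filter, Finset.mem_range]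
      exact ⟨hjN, h _ hjN (by rw [hcast]; exact hxi) (by rw [hcast]; exact hiz)⟩
    have hinj : Set.InjOn (fun i : ℤ => (i - 1).toNat) (Finset.Icc ⌈x⌉ ⌊z⌋) := by
      intro a ha b hb hab
      simp only [Finset.coe_Icc, Set.mem_Icc] at ha hb
      have ha1 : 1 ≤ a := le_trans hcx ha.1
      have hb1 : 1 ≤ b := le_trans hcx hb.1
      simp only at hab
      omega
    have hc1 : (Finset.Icc ⌈x⌉ ⌊z⌋).card ≤ ((Finset.range N).filter P).card := by
      rw [← Finset.card_image_of_injOn hinj]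
      exact Finset.card_le_card key
    have hc2 : z - x - 1 ≤ ((Finset.Icc ⌈x⌉ ⌊z⌋).card : ℝ) := by
      rw [Int.card_Icc]
      have h1 : (z : ℝ) - 1 < (⌊z⌋ : ℝ) := Int.sub_one_lt_floor z
      have h2 : (⌈x⌉ : ℝ) < x + 1 := Int.ceil_lt_add_one x
      have h3 : (⌊z⌋ + 1 - ⌈x⌉ : ℤ) ≤ (⌊z⌋ + 1 - ⌈x⌉).toNat := Int.self_le_toNat _
      have h4 : ((⌊z⌋ : ℝ) + 1 - ⌈x⌉) ≤ ((⌊z⌋ + 1 - ⌈x⌉).toNat : ℝ) := by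
        exact_mod_cast h3
      linarith
    calc z - x - 1 ≤ ((Finset.Icc ⌈x⌉ ⌊z⌋).card : ℝ) := hc2
    _ ≤ _ := by exact_mod_cast hc1

private lemma cnt_add (Q : ℕ → Prop) [DecidablePred Q] (a b : ℕ) :
    ((Finset.range (a + b)).filter Q).card
      = ((Finset.range a).filter Q).card + ((Finset.range b).filter fun j => Q (a + j)).card := by
  induction b with
  | zero => simp
  | succ b ih =>
    rw [← Nat.add_assoc, Finset.range_add_one, Finset.range_add_one (n := b),
      Finset.filter_insert, Finset.filter_insert]
    by_cases h : Q (a + b)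
    · rw [if_pos h, if_pos h, Finset.card_insert_of_notMem (by simp),
        Finset.card_insert_of_notMem (by simp), ih]
      omega
    · rw [if_neg h, if_neg h, ih]

private lemma blockEst (y : ℕ → ℝ)
    (hy : ∀ M j, j ≤ M → |y (triN M + j) - ((j : ℝ) + 1) / ((M : ℝ) + 2)| ≤ 1 / ((M : ℝ) + 2) ^ 2)
    (c d : ℝ) (hc : 0 ≤ c) (hcd : c < d) (hd : d ≤ 1) (M : ℕ) :
    |(((Finset.range (M + 1)).filter fun j => y (triN M + j) ∈ Set.Icc c d).card : ℝ)
      - (d - c) * ((M : ℝ) + 1)| ≤ 3 := by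
  obtain ⟨m2, hm2def⟩ : ∃ m2 : ℝ, m2 = (M : ℝ) + 2 := ⟨_, rfl⟩
  have hMc : (0 : ℝ) ≤ (M : ℝ) := Nat.cast_nonneg M
  have hm2 : (2 : ℝ) ≤ m2 := by rw [hm2def]; linarith
  have hm2pos : (0 : ℝ) < m2 := by linarith
  obtain ⟨ε, hεdef⟩ : ∃ ε : ℝ, ε = 1 / m2 ^ 2 := ⟨_, rfl⟩
  have hεpos : (0 : ℝ) < ε := by rw [hεdef]; positivity
  have hεm2 : ε * m2 = 1 / m2 := by rw [hεdef]; field_simp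
  have hy' : ∀ j ≤ M, |y (triN M + j) - ((j : ℝ) + 1) / m2| ≤ ε := by
    intro j hj
    rw [hεdef, hm2def]
    exact hy M j hj
  have hhalf : 1 / m2 ≤ 1 / 2 := by
    apply one_div_le_one_div_of_le <;> linarith
  have hdc1 : d - c ≤ 1 := by linarith
  -- upper bound
  have hup : (((Finset.range (M + 1)).filter fun j => y (triN M + j) ∈ Set.Icc c d).card : ℝ)
      ≤ (d - c) * m2 + 2 := by
    have := cardA ((Finset.range (M + 1)).filter fun j => y (triN M + j) ∈ Set.Icc c d)
      ((c - ε) * m2 - 1) ((d + ε) * m2 - 1)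
      (by nlinarith)
      (by
        intro j hj
        simp only [Finset.mem_filter, Finset.mem_range, Set.mem_Icc] at hj
        obtain ⟨hjM, hyc, hyd⟩ := hj
        have hjM' : j ≤ M := Nat.lt_succ_iff.mp hjM
        have ht := abs_le.mp (hy' j hjM')
        have h1 : c - ε ≤ ((j : ℝ) + 1) / m2 := by linarith [ht.1, ht.2]
        have h2 : ((j : ℝ) + 1) / m2 ≤ d + ε := by linarith [ht.1, ht.2]
        have h1' : (c - ε) * m2 ≤ (j : ℝ) + 1 := (le_div_iff₀ hm2pos).mp h1
        have h2' : (j : ℝ) + 1 ≤ (d + ε) * m2 := (div_le_iff₀ hm2pos).mp h2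
        constructor <;> linarith)
    have hcalc : (d + ε) * m2 - 1 - ((c - ε) * m2 - 1) + 1 = (d - c) * m2 + 2 * (ε * m2) + 1 := by
      ring
    rw [hcalc] at this
    rw [hεm2] at this
    linarith
  -- lower bound
  have hlo : (d - c) * m2 - 2
      ≤ (((Finset.range (M + 1)).filter fun j => y (triN M + j) ∈ Set.Icc c d).card : ℝ) := by
    have := cardB (M + 1) ((c + ε) * m2) ((d - ε) * m2)
      (by positivity)
      (by
        have hq : ((M : ℝ) + 1) + 1 = m2 := by rw [hm2def]; ring
        push_cast
        rw [hq]
        nlinarith)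
      (fun j => y (triN M + j) ∈ Set.Icc c d)
      (by
        intro j hjM h1 h2
        have hjM' : j ≤ M := Nat.lt_succ_iff.mp hjM
        have ht := abs_le.mp (hy' j hjM')
        have h1' : c + ε ≤ ((j : ℝ) + 1) / m2 := (le_div_iff₀ hm2pos).mpr h1
        have h2' : ((j : ℝ) + 1) / m2 ≤ d - ε := (div_le_iff₀ hm2pos).mpr h2
        constructor <;> linarith [ht.1, ht.2])
    have hcalc : (d - ε) * m2 - (c + ε) * m2 - 1 = (d - c) * m2 - 2 * (ε * m2) - 1 := by ring
    rw [hcalc, hεm2] at this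
    linarith
  have hsplit : (d - c) * m2 = (d - c) * ((M : ℝ) + 1) + (d - c) := by
    rw [hm2def]; ring
  rw [abs_le]
  constructor <;> nlinarith

private lemma triN_ge (M : ℕ) : M ≤ triN M := by
  induction M with
  | zero => simp [triN]
  | succ M ih => simp only [triN]; omega

private lemma triN_two (M : ℕ) : 2 * triN M = M * (M + 1) := by
  induction M with
  | zero => simp [triN]
  | succ M ih => simp only [triN]; ring_nf; ring_nf at ih; omega

private lemma cntTri (y : ℕ → ℝ)
    (hy : ∀ M j, j ≤ M → |y (triN M + j) - ((j : ℝ) + 1) / ((M : ℝ) + 2)| ≤ 1 / ((M : ℝ) + 2) ^ 2)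
    (c d : ℝ) (hc : 0 ≤ c) (hcd : c < d) (hd : d ≤ 1) :
    ∀ M, |((((Finset.range (triN M)).filter fun k => y k ∈ Set.Icc c d).card : ℝ))
      - (d - c) * (triN M : ℝ)| ≤ 3 * M := by
  intro M
  induction M with
  | zero => simp [triN]
  | succ M ih =>
    have hsplit : triN (M + 1) = triN M + (M + 1) := rfl
    rw [hsplit, cnt_add]
    have hb := blockEst y hy c d hc hcd hd M
    rw [abs_le] at ih hb ⊢
    have hcast : ((triN M + (M + 1) : ℕ) : ℝ) = (triN M : ℝ) + (M : ℝ) + 1 := by push_cast; ring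
    rw [hcast]
    push_cast
    constructor <;> linarith [ih.1, ih.2, hb.1, hb.2]

set_option maxHeartbeats 1000000 in
private lemma sumEst (y : ℕ → ℝ)
    (hy : ∀ M j, j ≤ M → |y (triN M + j) - ((j : ℝ) + 1) / ((M : ℝ) + 2)| ≤ 1 / ((M : ℝ) + 2) ^ 2)
    (c d : ℝ) (hc : 0 ≤ c) (hcd : c < d) (hd : d ≤ 1) :
    Tendsto (fun n : ℕ => ((((Finset.range n).filter fun k => y k ∈ Set.Icc c d).card : ℝ)) / n)
      atTop (𝓝 (d - c)) := by
  have key : ∀ n : ℕ, 1 ≤ (blkP n).1 →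
      |(((Finset.range n).filter fun k => y k ∈ Set.Icc c d).card : ℝ) / n - (d - c)|
        ≤ 8 / ((blkP n).1 : ℝ) := by
    intro n hM1
    obtain ⟨hjM, hn⟩ := blkP_spec n
    rcases hp : blkP n with ⟨M, j⟩
    simp only [hp] at hjM hn hM1 ⊢
    have htri1 : triN (M + 1) = triN M + (M + 1) := rfl
    have htm : triN M ≤ n := by omega
    have htm2 : n ≤ triN M + M := by omega
    have hn1 : 1 ≤ n := le_trans (le_trans hM1 (triN_ge M)) htm
    have hdc0 : (0 : ℝ) ≤ d - c := by linarith
    have hdc1 : d - c ≤ 1 := by linarith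
    have hmono1 : (((Finset.range (triN M)).filter fun k => y k ∈ Set.Icc c d).card : ℝ)
        ≤ (((Finset.range n).filter fun k => y k ∈ Set.Icc c d).card : ℝ) := by
      exact_mod_cast Finset.card_le_card
        (Finset.filter_subset_filter _ (Finset.range_subset_range.2 htm))
    have hmono2 : (((Finset.range n).filter fun k => y k ∈ Set.Icc c d).card : ℝ)
        ≤ (((Finset.range (triN (M + 1))).filter fun k => y k ∈ Set.Icc c d).card : ℝ) := by
      exact_mod_cast Finset.card_le_card
        (Finset.filter_subset_filter _ (Finset.range_subset_range.2 (by omega)))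
    have h1 := abs_le.mp (cntTri y hy c d hc hcd hd M)
    have h2 := abs_le.mp (cntTri y hy c d hc hcd hd (M + 1))
    have cT1 : (triN M : ℝ) ≤ (n : ℝ) := by exact_mod_cast htm
    have cT1' : (n : ℝ) ≤ (triN M : ℝ) + (M : ℝ) := by exact_mod_cast htm2
    have cT2 : (triN (M + 1) : ℝ) ≤ (n : ℝ) + (M : ℝ) + 1 := by
      have : triN (M + 1) ≤ n + M + 1 := by omega
      exact_mod_cast this
    have p1 : (d - c) * (triN (M + 1) : ℝ) ≤ (d - c) * ((n : ℝ) + (M : ℝ) + 1) :=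
      mul_le_mul_of_nonneg_left cT2 hdc0
    have hMc : (0 : ℝ) ≤ (M : ℝ) := Nat.cast_nonneg M
    have p2 : (d - c) * ((M : ℝ) + 1) ≤ (M : ℝ) + 1 := by nlinarith
    have p3 : (d - c) * (n : ℝ) ≤ (d - c) * (triN M : ℝ) + (M : ℝ) := by nlinarith
    have habs : |(((Finset.range n).filter fun k => y k ∈ Set.Icc c d).card : ℝ)
        - (d - c) * (n : ℝ)| ≤ 4 * ((M : ℝ) + 1) := by
      rw [abs_le]
      push_cast at h2
      constructor
      · nlinarith [h1.1, hmono1]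
      · nlinarith [h2.2, hmono2]
    have hn0 : (0 : ℝ) < (n : ℝ) := by exact_mod_cast hn1
    have hM0 : (0 : ℝ) < (M : ℝ) := by exact_mod_cast hM1
    have heq : (((Finset.range n).filter fun k => y k ∈ Set.Icc c d).card : ℝ) / n - (d - c)
        = ((((Finset.range n).filter fun k => y k ∈ Set.Icc c d).card : ℝ)
          - (d - c) * (n : ℝ)) / n := by
      field_simp
    rw [heq, abs_div, abs_of_pos hn0, div_le_div_iff₀ hn0 hM0]
    have httw : 2 * (triN M : ℝ) = (M : ℝ) * ((M : ℝ) + 1) := by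
      have h := triN_two M
      exact_mod_cast congrArg (fun k : ℕ => (k : ℝ)) h
    have q1 := mul_le_mul_of_nonneg_right habs hMc
    linarith [q1, httw, cT1]
  have hMten : Tendsto (fun n => (blkP n).1) atTop atTop := by
    apply tendsto_atTop_atTop.2
    intro b
    refine ⟨triN b, fun a ha => ?_⟩
    have h1 : (blkP (triN b)).1 = b := by
      have := blkP_tri_add b 0 (Nat.zero_le b)
      simpa using congrArg Prod.fst this
    calc b = (blkP (triN b)).1 := h1.symm
    _ ≤ (blkP a).1 := blkP_fst_mono ha
  have h8 : Tendsto (fun n : ℕ => 8 / ((blkP n).1 : ℝ)) atTop (𝓝 0) :=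
    (tendsto_const_div_atTop_nhds_zero_nat 8).comp hMten
  have hev : ∀ᶠ n : ℕ in atTop,
      ‖(((Finset.range n).filter fun k => y k ∈ Set.Icc c d).card : ℝ) / n - (d - c)‖
        ≤ 8 / ((blkP n).1 : ℝ) := by
    filter_upwards [hMten.eventually (eventually_ge_atTop 1)] with n hn
    simpa using key n hn
  have hz := squeeze_zero_norm' hev h8
  have h2 := hz.add_const (d - c)
  simpa using h2

/-- if `(C_t)_{t ∈ [0,1]}` is a family of pairwise disjoint subsets of
`[0,1]`, each everywhere dense in `(0,1)`, then for every `t` there is a sequence of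
points of `[0,1]` which is `C_t`-uniformly distributed (hence `λ`-uniformly
distributed) but not `C_s`-uniformly distributed for any `s ≠ t`. -/
theorem stmt6 (C : ↥(Set.Icc (0 : ℝ) 1) → Set ℝ)
    (hsub : ∀ t, C t ⊆ Set.Icc 0 1)
    (hdisj : ∀ t t', t ≠ t' → C t ∩ C t' = ∅)
    (hdense : ∀ t, Set.Ioo (0 : ℝ) 1 ⊆ closure (C t)) :
    ∀ t, ∃ y : ℕ → ℝ, (∀ n, y n ∈ Set.Icc (0 : ℝ) 1) ∧ IsUDSeq (C t) y ∧
      IsLambdaUDSeq y ∧ ∀ s, s ≠ t → ¬ IsUDSeq (C s) y := by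
  intro t
  have hex : ∀ k : ℕ, ∃ p : ℝ, p ∈ C t ∧
      |p - (((blkP k).2 : ℝ) + 1) / (((blkP k).1 : ℝ) + 2)| ≤ 1 / (((blkP k).1 : ℝ) + 2) ^ 2 := by
    intro k
    obtain ⟨hjM, -⟩ := blkP_spec k
    have hjMR : ((blkP k).2 : ℝ) ≤ ((blkP k).1 : ℝ) := by exact_mod_cast hjM
    have hpos : (0 : ℝ) < ((blkP k).1 : ℝ) + 2 := by positivity
    have hIoo : (((blkP k).2 : ℝ) + 1) / (((blkP k).1 : ℝ) + 2) ∈ Set.Ioo (0 : ℝ) 1 := by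
      constructor
      · positivity
      · rw [div_lt_one hpos]
        linarith
    have hcl := hdense t hIoo
    have hε : (0 : ℝ) < 1 / (((blkP k).1 : ℝ) + 2) ^ 2 := by positivity
    obtain ⟨p, hp, hdp⟩ := Metric.mem_closure_iff.mp hcl _ hε
    refine ⟨p, hp, ?_⟩
    rw [Real.dist_eq, abs_sub_comm] at hdp
    exact hdp.le
  choose y hyC hyd using hex
  have hy : ∀ M j, j ≤ M →
      |y (triN M + j) - ((j : ℝ) + 1) / ((M : ℝ) + 2)| ≤ 1 / ((M : ℝ) + 2) ^ 2 := by
    intro M j hj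
    have hb := blkP_tri_add M j hj
    have h2 := hyd (triN M + j)
    rw [hb] at h2
    simpa using h2
  have hlam : IsLambdaUDSeq y := by
    intro c d hc hcd hd
    have hs := sumEst y hy c d hc hcd hd
    have hset : ∀ n : ℕ, {k : ℕ | k < n ∧ y k ∈ Set.Icc c d}
        = ↑((Finset.range n).filter fun k => y k ∈ Set.Icc c d) := by
      intro n
      ext k
      simp [Finset.mem_filter, Finset.mem_range]
    simpa only [hset, Set.ncard_coe_finset] using hs
  refine ⟨y, fun n => hsub t (hyC n), ?_, hlam, ?_⟩
  · intro c d hc hcd hd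
    have hset : ∀ n : ℕ, {k : ℕ | k < n ∧ y k ∈ Set.Icc c d ∩ C t}
        = {k : ℕ | k < n ∧ y k ∈ Set.Icc c d} := by
      intro n
      ext k
      simp only [Set.mem_setOf_eq, Set.mem_inter_iff]
      exact ⟨fun h => ⟨h.1, h.2.1⟩, fun h => ⟨h.1, h.2, hyC k⟩⟩
    simp only [hset]
    exact hlam c d hc hcd hd
  · intro s hst hud
    have h01 := hud 0 1 le_rfl one_pos le_rfl
    have hzero : ∀ n : ℕ, {k : ℕ | k < n ∧ y k ∈ Set.Icc (0 : ℝ) 1 ∩ C s} = (∅ : Set ℕ) := by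
      intro n
      ext k
      simp only [Set.mem_setOf_eq, Set.mem_inter_iff, Set.mem_empty_iff_false, iff_false,
        not_and]
      intro _ _ hks
      exact Set.eq_empty_iff_forall_notMem.mp (hdisj s t hst) (y k) ⟨hks, hyC k⟩
    have hone : Tendsto (fun _ : ℕ => (0 : ℝ)) atTop (𝓝 (1 : ℝ)) := by
      have : (fun n : ℕ => (Set.ncard {k : ℕ | k < n ∧ y k ∈ Set.Icc (0 : ℝ) 1 ∩ C s} : ℝ) / n)
          = fun _ : ℕ => (0 : ℝ) := by
        funext n
        rw [hzero n]
        simp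
      rw [this] at h01
      simpa using h01
    have := tendsto_nhds_unique hone tendsto_const_nhds
    norm_num at this
end

section
/- Let (C_t)_{t∈[0,1]} be a partition of [0,1] (pairwise disjoint sets whose union is [0,1]). Then for every λ-uniformly distributed sequence (y_n)_{n≥1} of points of [0,1] there exists a countable set T ⊆ [0,1] such that (y_n)_{n≥1} is not C_t-uniformly distributed for any t ∈ [0,1] \ T. -/
open Filter Topology

/-- if `(C_t)_{t ∈ [0,1]}` is a partition of `[0,1]`, then for every
`λ`-uniformly distributed sequence of points of `[0,1]` there is a countable set
`T ⊆ [0,1]` such that the sequence is not `C_t`-uniformly distributed for any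
`t ∉ T`. -/
theorem stmt7 (C : ↥(Set.Icc (0 : ℝ) 1) → Set ℝ)
    (hdisj : ∀ t t', t ≠ t' → C t ∩ C t' = ∅)
    (hunion : (⋃ t, C t) = Set.Icc (0 : ℝ) 1)
    (y : ℕ → ℝ) (hy : ∀ n, y n ∈ Set.Icc (0 : ℝ) 1) (hud : IsLambdaUDSeq y) :
    ∃ T : Set ↥(Set.Icc (0 : ℝ) 1), T.Countable ∧
      ∀ t, t ∉ T → ¬ IsUDSeq (C t) y := by
  have hex : ∀ n : ℕ, ∃ t, y n ∈ C t := by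
    intro n
    have : y n ∈ ⋃ t, C t := hunion.symm ▸ hy n
    exact Set.mem_iUnion.mp this
  choose f hf using hex
  refine ⟨Set.range f, Set.countable_range f, ?_⟩
  intro t ht hUD
  have hnot : ∀ k, y k ∉ C t := by
    intro k hk
    rcases eq_or_ne t (f k) with h | h
    · exact ht ⟨k, h.symm⟩
    · have := hdisj t (f k) h
      exact Set.eq_empty_iff_forall_notMem.mp this (y k) ⟨hk, hf k⟩
  have h01 := hUD 0 1 le_rfl one_pos le_rfl
  have hzero : ∀ n : ℕ, {k : ℕ | k < n ∧ y k ∈ Set.Icc (0:ℝ) 1 ∩ C t} = ∅ := by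
    intro n
    ext k
    simp only [Set.mem_setOf_eq, Set.mem_empty_iff_false, iff_false, not_and]
    intro _ hk
    exact hnot k hk.2
  have : Tendsto (fun _ : ℕ => (0 : ℝ)) atTop (𝓝 (1 - 0)) := by
    convert h01 using 2 with n
    rw [hzero n]
    simp
  have := tendsto_nhds_unique this tendsto_const_nhds
  norm_num at this
end

section
/- Let S be a σ-algebra of subsets of [0,1], let μ be a probability measure on ([0,1], S), and let f : [0,1] → ℝ be μ-integrable. Then the infinite product measure μ^∞ of the set of all sequences (x_k)_{k≥1} ∈ [0,1]^ℕ for which lim_{n→∞} (1/n) ∑_{k=1}^n f(x_k) = ∫_{[0,1]} f(x) dμ(x) is equal to 1. -/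
open Filter Topology MeasureTheory

/-- if `S` is a σ-algebra on `[0,1]`, `μ` a probability measure on
`([0,1], S)` and `f : [0,1] → ℝ` is `μ`-integrable, then the infinite product
measure `μ^∞` (characterized by its values on cylinder sets; here `P` is any such
product measure on `[0,1]^ℕ` with the product σ-algebra, applied to an arbitrary
set via its outer measure) of the set of all sequences `(x_k)` for which
`(1/n) ∑_{k<n} f(x_k) → ∫ f dμ` equals 1. -/
theorem stmt8 (S : MeasurableSpace ↥(Set.Icc (0 : ℝ) 1))
    (μ : @Measure ↥(Set.Icc (0 : ℝ) 1) S)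
    (hprob : μ Set.univ = 1)
    (f : ↥(Set.Icc (0 : ℝ) 1) → ℝ)
    (hf : Integrable f μ)
    (P : @Measure (ℕ → ↥(Set.Icc (0 : ℝ) 1))
      (@MeasurableSpace.pi ℕ (fun _ => ↥(Set.Icc (0 : ℝ) 1)) (fun _ => S)))
    (hP : ∀ (s : Finset ℕ) (A : ℕ → Set ↥(Set.Icc (0 : ℝ) 1)),
      (∀ i ∈ s, MeasurableSet[S] (A i)) →
        P {x | ∀ i ∈ s, x i ∈ A i} = ∏ i ∈ s, μ (A i)) :
    P {x : ℕ → ↥(Set.Icc (0 : ℝ) 1) |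
        Tendsto (fun n : ℕ => (∑ k ∈ Finset.range n, f (x k)) / n) atTop
          (𝓝 (∫ t, f t ∂μ))} = 1 := by
  letI : MeasurableSpace ↥(Set.Icc (0 : ℝ) 1) := S
  haveI : IsProbabilityMeasure μ := ⟨hprob⟩
  -- P is a probability measure
  haveI : IsProbabilityMeasure P := by
    constructor
    have h := hP ∅ (fun _ => Set.univ) (by simp)
    simpa using h
  -- coordinate maps
  have hmeas : ∀ i : ℕ, Measurable (fun x : ℕ → ↥(Set.Icc (0 : ℝ) 1) => x i) :=
    fun i => measurable_pi_apply i
  have hmap : ∀ i : ℕ, Measure.map (fun x : ℕ → ↥(Set.Icc (0 : ℝ) 1) => x i) P = μ := by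
    intro i
    ext s hs
    rw [Measure.map_apply (hmeas i) hs]
    have h := hP {i} (fun _ => s) (by simpa using hs)
    simpa [Set.preimage] using h
  -- a measurable representative of f
  set g : ↥(Set.Icc (0 : ℝ) 1) → ℝ := hf.1.mk f with hg_def
  have hgmeas : Measurable g := hf.1.stronglyMeasurable_mk.measurable
  have hfg : f =ᵐ[μ] g := hf.1.ae_eq_mk
  have hgint : Integrable g μ := hf.congr hfg
  -- the random variables
  set X : ℕ → (ℕ → ↥(Set.Icc (0 : ℝ) 1)) → ℝ := fun i x => g (x i) with hX_def
  have hXmeas : ∀ i, Measurable (X i) := fun i => hgmeas.comp (hmeas i)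
  have hXmap : ∀ i, Measure.map (X i) P = Measure.map g μ := by
    intro i
    have : X i = g ∘ (fun x => x i) := rfl
    rw [this, ← Measure.map_map hgmeas (hmeas i), hmap i]
  -- independence
  have hindep : ProbabilityTheory.iIndepFun
      (fun i (x : ℕ → ↥(Set.Icc (0 : ℝ) 1)) => x i) P := by
    rw [ProbabilityTheory.iIndepFun_iff_measure_inter_preimage_eq_mul]
    intro s sets hsets
    have h := hP s sets hsets
    have h1 : (⋂ i ∈ s, (fun x : ℕ → ↥(Set.Icc (0 : ℝ) 1) => x i) ⁻¹' sets i) =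
        {x : ℕ → ↥(Set.Icc (0 : ℝ) 1) | ∀ i ∈ s, x i ∈ sets i} := by
      ext x; simp
    rw [h1, h]
    refine Finset.prod_congr rfl fun i hi => ?_
    rw [← hmap i, Measure.map_apply (hmeas i) (hsets i hi)]
  have hXindep : Pairwise (Function.onFun (ProbabilityTheory.IndepFun · · P) X) := by
    intro i j hij
    exact (hindep.indepFun hij).comp hgmeas hgmeas
  have hXident : ∀ i, ProbabilityTheory.IdentDistrib (X i) (X 0) P P := by
    intro i
    exact ⟨(hXmeas i).aemeasurable, (hXmeas 0).aemeasurable, by rw [hXmap i, hXmap 0]⟩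
  have hXint : Integrable (X 0) P := by
    have : Integrable g (Measure.map (fun x : ℕ → ↥(Set.Icc (0 : ℝ) 1) => x 0) P) := by
      rw [hmap 0]; exact hgint
    exact this.comp_measurable (hmeas 0)
  -- strong law for g
  have hslln := ProbabilityTheory.strong_law_ae_real X hXint hXindep hXident
  -- integral identification
  have hint0 : ∫ x, X 0 x ∂P = ∫ t, f t ∂μ := by
    have : ∫ x, g (x 0) ∂P = ∫ t, g t ∂(Measure.map (fun x : ℕ → ↥(Set.Icc (0 : ℝ) 1) => x 0) P) := by
      rw [integral_map (hmeas 0).aemeasurable hgmeas.aestronglyMeasurable]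
    rw [show (∫ x, X 0 x ∂P) = ∫ x, g (x 0) ∂P from rfl, this, hmap 0,
      integral_congr_ae hfg.symm]
  -- a.e. agreement of f and g along coordinates
  have hae : ∀ᵐ x ∂P, ∀ k : ℕ, f (x k) = g (x k) := by
    rw [ae_all_iff]
    intro k
    have : f ∘ (fun x : ℕ → ↥(Set.Icc (0 : ℝ) 1) => x k) =ᵐ[P]
        g ∘ (fun x => x k) := by
      apply ae_eq_comp (hmeas k).aemeasurable
      rw [hmap k]; exact hfg
    exact this
  have hfinal : ∀ᵐ x ∂P, Tendsto (fun n : ℕ => (∑ k ∈ Finset.range n, f (x k)) / n) atTop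
      (𝓝 (∫ t, f t ∂μ)) := by
    filter_upwards [hslln, hae] with x hx hxe
    rw [← hint0]
    have : (fun n : ℕ => (∑ k ∈ Finset.range n, f (x k)) / n) =
        fun n : ℕ => (∑ k ∈ Finset.range n, X k x) / n := by
      funext n
      congr 1
      exact Finset.sum_congr rfl fun k _ => hxe k
    rw [this]
    exact hx
  rw [← measure_univ (μ := P)]
  apply measure_congr
  exact Filter.eventuallyEq_univ.2 hfinal
end

section
/- Let K be a translation-invariant σ-ideal of subsets of the real line ℝ (i.e., K is closed under subsets and countable unions, and Z ∈ K, g ∈ ℝ imply g + Z ∈ K) such that every Z ∈ K has inner Lebesgue measure zero, i.e., λ_*(Z) = 0, where λ_* is the inner measure induced by the linear Lebesgue measure λ. Then there exists a measure μ defined on the σ-algebra generated by the Lebesgue measurable sets together with K such that: μ is translation-invariant; μ agrees with λ on all Lebesgue measurable sets; μ(Z) = 0 for every Z ∈ K; and every set of this σ-algebra can be written in the form (X ∪ Z') \ Z'' with X Lebesgue measurable and Z', Z'' ∈ K, with μ((X ∪ Z') \ Z'') = λ(X). -/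
open MeasureTheory

/-- The σ-algebra generated by the Lebesgue measurable sets together with the
members of a class `K` of subsets of `ℝ`. -/
def extSigmaAlgebra (K : Set (Set ℝ)) : MeasurableSpace ℝ :=
  MeasurableSpace.generateFrom ({A : Set ℝ | NullMeasurableSet A volume} ∪ K)

private lemma symmDiff_empty' (A : Set ℝ) : symmDiff A ∅ = A := by simp

private lemma symmDiff_self' (A : Set ℝ) : symmDiff A A = ∅ := by simp

private lemma nullMeasurableSet_empty' : NullMeasurableSet (∅ : Set ℝ) volume :=
  MeasurableSet.empty.nullMeasurableSet

private lemma image_add_eq' (g : ℝ) (A : Set ℝ) :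
    (fun x => g + x) '' A = (fun x => -g + x) ⁻¹' A := by
  ext x
  constructor
  · rintro ⟨y, hy, rfl⟩
    simpa using hy
  · intro h
    exact ⟨-g + x, h, by ring⟩

/-- given a translation-invariant σ-ideal `K` of subsets of `ℝ` all of
whose members have inner Lebesgue measure zero, there is a translation-invariant
measure on the σ-algebra generated by the Lebesgue measurable sets together with `K`
which extends Lebesgue measure, vanishes on `K`, and is given on each measurable set
`(X ∪ Z') \ Z''` (the general form of a measurable set) by `λ(X)`. -/
theorem stmt9 (K : Set (Set ℝ))
    (hempty : ∅ ∈ K)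
    (hsub : ∀ Z ∈ K, ∀ W : Set ℝ, W ⊆ Z → W ∈ K)
    (hcountable_union : ∀ f : ℕ → Set ℝ, (∀ k, f k ∈ K) → (⋃ k, f k) ∈ K)
    (hinv : ∀ Z ∈ K, ∀ g : ℝ, (fun x => g + x) '' Z ∈ K)
    (hinner : ∀ Z ∈ K, ∀ X : Set ℝ, NullMeasurableSet X volume → X ⊆ Z →
      volume X = 0) :
    ∃ μ : @Measure ℝ (extSigmaAlgebra K),
      (∀ (g : ℝ) (A : Set ℝ), MeasurableSet[extSigmaAlgebra K] A →
        μ ((fun x => g + x) '' A) = μ A) ∧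
      (∀ X : Set ℝ, NullMeasurableSet X volume → μ X = volume X) ∧
      (∀ Z ∈ K, μ Z = 0) ∧
      (∀ A : Set ℝ, MeasurableSet[extSigmaAlgebra K] A →
        ∃ (X Z' Z'' : Set ℝ), NullMeasurableSet X volume ∧ Z' ∈ K ∧ Z'' ∈ K ∧
          A = (X ∪ Z') \ Z'' ∧ μ A = volume X) := by
  classical
  -- union of two members of K is in K
  have hK2 : ∀ {Z W : Set ℝ}, Z ∈ K → W ∈ K → Z ∪ W ∈ K := by
    intro Z W hZ hW
    have h := hcountable_union (fun n => if n = 0 then Z else W)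
      (by intro k; by_cases h : k = 0 <;> simp [h, hZ, hW])
    have he : (⋃ n, if n = 0 then Z else W) = Z ∪ W := by
      ext x
      simp only [Set.mem_iUnion, Set.mem_union]
      constructor
      · rintro ⟨n, hn⟩
        by_cases h0 : n = 0
        · left; simpa [h0] using hn
        · right; simpa [h0] using hn
      · rintro (hx | hx)
        · exact ⟨0, by simpa using hx⟩
        · exact ⟨1, by simpa using hx⟩
    rwa [he] at h
  -- every set in the generated σ-algebra has a null-measurable representative
  have hP_rep : ∀ A : Set ℝ, MeasurableSet[extSigmaAlgebra K] A →
      ∃ X, NullMeasurableSet X volume ∧ symmDiff A X ∈ K := by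
    intro A hA
    let m : MeasurableSpace ℝ :=
      { MeasurableSet' := fun A => ∃ X, NullMeasurableSet X volume ∧ symmDiff A X ∈ K
        measurableSet_empty := ⟨∅, nullMeasurableSet_empty',
          by rw [symmDiff_self']; exact hempty⟩
        measurableSet_compl := by
          rintro A ⟨X, hX, hAX⟩
          exact ⟨Xᶜ, hX.compl, by rwa [compl_symmDiff_compl]⟩
        measurableSet_iUnion := by
          intro f hf
          choose X hX hfX using hf
          refine ⟨⋃ n, X n, NullMeasurableSet.iUnion hX, ?_⟩
          refine hsub _ (hcountable_union (fun n => symmDiff (f n) (X n)) hfX) _ ?_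
          intro x hx
          rw [Set.mem_symmDiff] at hx
          simp only [Set.mem_iUnion] at hx ⊢
          rcases hx with ⟨⟨n, hn⟩, hnot⟩ | ⟨⟨n, hn⟩, hnot⟩
          · exact ⟨n, Set.mem_symmDiff.2 (Or.inl ⟨hn, fun h => hnot ⟨n, h⟩⟩)⟩
          · exact ⟨n, Set.mem_symmDiff.2 (Or.inr ⟨hn, fun h => hnot ⟨n, h⟩⟩)⟩ }
    have hle : extSigmaAlgebra K ≤ m := by
      apply MeasurableSpace.generateFrom_le
      rintro t (ht | ht)
      · exact ⟨t, ht, by rw [symmDiff_self']; exact hempty⟩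
      · exact ⟨∅, nullMeasurableSet_empty', by rw [symmDiff_empty']; exact ht⟩
    exact hle A hA
  -- well-definedness: two null-measurable sets whose symmDiff lies in K have equal measure
  have hwd : ∀ {X Y : Set ℝ}, NullMeasurableSet X volume → NullMeasurableSet Y volume →
      symmDiff X Y ∈ K → volume X = volume Y := by
    intro X Y hX hY hXY
    have h1 : volume (X \ Y) = 0 :=
      hinner _ hXY _ (hX.diff hY) (fun x hx => Set.mem_symmDiff.2 (Or.inl ⟨hx.1, hx.2⟩))
    have h2 : volume (Y \ X) = 0 :=
      hinner _ hXY _ (hY.diff hX) (fun x hx => Set.mem_symmDiff.2 (Or.inr ⟨hx.1, hx.2⟩))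
    have hXle : volume X ≤ volume Y := by
      calc volume X ≤ volume (Y ∪ (X \ Y)) := by
            refine measure_mono ?_
            intro x hx
            by_cases h : x ∈ Y
            · exact Or.inl h
            · exact Or.inr ⟨hx, h⟩
        _ ≤ volume Y + volume (X \ Y) := measure_union_le _ _
        _ = volume Y := by rw [h1, add_zero]
    have hYle : volume Y ≤ volume X := by
      calc volume Y ≤ volume (X ∪ (Y \ X)) := by
            refine measure_mono ?_
            intro x hx
            by_cases h : x ∈ X
            · exact Or.inl h
            · exact Or.inr ⟨hx, h⟩
        _ ≤ volume X + volume (Y \ X) := measure_union_le _ _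
        _ = volume X := by rw [h2, add_zero]
    exact le_antisymm hXle hYle
  -- pick a representative
  let rep : Set ℝ → Set ℝ := fun A =>
    if h : ∃ X, NullMeasurableSet X volume ∧ symmDiff A X ∈ K then h.choose else ∅
  have hrep : ∀ {A : Set ℝ}, (∃ X, NullMeasurableSet X volume ∧ symmDiff A X ∈ K) →
      NullMeasurableSet (rep A) volume ∧ symmDiff A (rep A) ∈ K := by
    intro A h
    simp only [rep, dif_pos h]
    exact h.choose_spec
  -- the measure of the representative equals the measure of any valid representative
  have hval : ∀ {A X : Set ℝ}, NullMeasurableSet X volume → symmDiff A X ∈ K →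
      volume (rep A) = volume X := by
    intro A X hX hAX
    obtain ⟨h1, h2⟩ := hrep ⟨X, hX, hAX⟩
    refine hwd h1 hX (hsub _ (hK2 h2 hAX) _ ?_)
    have h3 := symmDiff_triangle (rep A) A X
    rwa [symmDiff_comm (rep A) A] at h3
  have hm0 : volume (rep (∅ : Set ℝ)) = 0 := by
    rw [hval nullMeasurableSet_empty' (by rw [symmDiff_empty']; exact hempty)]
    exact measure_empty
  have hmU : ∀ ⦃f : ℕ → Set ℝ⦄, (∀ i, MeasurableSet[extSigmaAlgebra K] (f i)) →
      Pairwise (Function.onFun Disjoint f) →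
      volume (rep (⋃ i, f i)) = ∑' i, volume (rep (f i)) := by
    intro f h hd
    have hXs : ∀ i, NullMeasurableSet (rep (f i)) volume ∧ symmDiff (f i) (rep (f i)) ∈ K :=
      fun i => hrep (hP_rep _ (h i))
    have hU : symmDiff (⋃ i, f i) (⋃ i, rep (f i)) ∈ K := by
      refine hsub _ (hcountable_union (fun i => symmDiff (f i) (rep (f i)))
        (fun i => (hXs i).2)) _ ?_
      intro x hx
      rw [Set.mem_symmDiff] at hx
      simp only [Set.mem_iUnion] at hx ⊢
      rcases hx with ⟨⟨n, hn⟩, hnot⟩ | ⟨⟨n, hn⟩, hnot⟩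
      · exact ⟨n, Set.mem_symmDiff.2 (Or.inl ⟨hn, fun hh => hnot ⟨n, hh⟩⟩)⟩
      · exact ⟨n, Set.mem_symmDiff.2 (Or.inr ⟨hn, fun hh => hnot ⟨n, hh⟩⟩)⟩
    rw [hval (NullMeasurableSet.iUnion fun i => (hXs i).1) hU]
    refine measure_iUnion₀ ?_ (fun i => (hXs i).1)
    intro i j hij
    have hsubij : rep (f i) ∩ rep (f j) ⊆
        symmDiff (f i) (rep (f i)) ∪ symmDiff (f j) (rep (f j)) := by
      rintro x ⟨hxi, hxj⟩
      by_cases hfi : x ∈ f i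
      · have hfj : x ∉ f j := Set.disjoint_left.mp (hd hij) hfi
        exact Or.inr (Set.mem_symmDiff.2 (Or.inr ⟨hxj, hfj⟩))
      · exact Or.inl (Set.mem_symmDiff.2 (Or.inr ⟨hxi, hfi⟩))
    exact hinner _ (hK2 (hXs i).2 (hXs j).2) _ ((hXs i).1.inter (hXs j).1) hsubij
  -- the measure
  let μ : @Measure ℝ (extSigmaAlgebra K) :=
    @Measure.ofMeasurable ℝ (extSigmaAlgebra K) (fun s _ => volume (rep s)) hm0
      (fun f h hd => hmU h hd)
  have happly : ∀ {s : Set ℝ}, MeasurableSet[extSigmaAlgebra K] s →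
      μ s = volume (rep s) := by
    intro s hs
    exact @Measure.ofMeasurable_apply ℝ (extSigmaAlgebra K) _ hm0 (fun f h hd => hmU h hd) s hs
  -- null-measurable sets and members of K are measurable
  have hmeasNM : ∀ {X : Set ℝ}, NullMeasurableSet X volume →
      MeasurableSet[extSigmaAlgebra K] X := fun hX =>
    MeasurableSpace.measurableSet_generateFrom (Or.inl hX)
  have hmeasK : ∀ {Z : Set ℝ}, Z ∈ K → MeasurableSet[extSigmaAlgebra K] Z := fun hZ =>
    MeasurableSpace.measurableSet_generateFrom (Or.inr hZ)
  -- translates of null-measurable sets are null-measurable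
  have hNMtrans : ∀ (g : ℝ) {X : Set ℝ}, NullMeasurableSet X volume →
      NullMeasurableSet ((fun x => g + x) '' X) volume := by
    intro g X hX
    rw [image_add_eq']
    exact hX.preimage (measurePreserving_add_left volume (-g)).quasiMeasurePreserving
  -- translates of measurable sets are measurable
  have hmeas_img : ∀ (g : ℝ) (A : Set ℝ), MeasurableSet[extSigmaAlgebra K] A →
      MeasurableSet[extSigmaAlgebra K] ((fun x => g + x) '' A) := by
    intro g A hA
    rw [image_add_eq']
    have hm : @Measurable ℝ ℝ (extSigmaAlgebra K) (extSigmaAlgebra K) (fun x => -g + x) := by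
      refine @measurable_generateFrom ℝ ℝ (extSigmaAlgebra K) _ _ ?_
      rintro t (ht | ht)
      · refine hmeasNM ?_
        exact ht.preimage (measurePreserving_add_left volume (-g)).quasiMeasurePreserving
      · refine hmeasK ?_
        rw [← image_add_eq' g t]
        exact hinv t ht g
    exact hm hA
  refine ⟨μ, ?_, ?_, ?_, ?_⟩
  · -- translation invariance
    intro g A hA
    obtain ⟨hXnm, hAX⟩ := hrep (hP_rep A hA)
    rw [happly (hmeas_img g A hA), happly hA]
    have himg_nm : NullMeasurableSet ((fun x => g + x) '' (rep A)) volume :=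
      hNMtrans g hXnm
    have hsym : symmDiff ((fun x => g + x) '' A) ((fun x => g + x) '' (rep A)) ∈ K := by
      have heq : symmDiff ((fun x => g + x) '' A) ((fun x => g + x) '' (rep A))
          = (fun x => g + x) '' (symmDiff A (rep A)) := by
        rw [image_add_eq', image_add_eq', image_add_eq', Set.symmDiff_def, Set.symmDiff_def]
        simp [Set.preimage_union, Set.preimage_diff]
      rw [heq]
      exact hinv _ hAX g
    rw [hval himg_nm hsym, image_add_eq', measure_preimage_add]
  · -- extends volume
    intro X hX
    rw [happly (hmeasNM hX), hval hX (by rw [symmDiff_self']; exact hempty)]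
  · -- vanishes on K
    intro Z hZ
    rw [happly (hmeasK hZ), hval nullMeasurableSet_empty' (by rw [symmDiff_empty']; exact hZ)]
    exact measure_empty
  · -- general form of a measurable set
    intro A hA
    obtain ⟨hXnm, hAX⟩ := hrep (hP_rep A hA)
    refine ⟨rep A, A \ rep A, rep A \ A, hXnm, ?_, ?_, ?_, happly hA⟩
    · exact hsub _ hAX _ (fun x hx => Set.mem_symmDiff.2 (Or.inl ⟨hx.1, hx.2⟩))
    · exact hsub _ hAX _ (fun x hx => Set.mem_symmDiff.2 (Or.inr ⟨hx.1, hx.2⟩))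
    · ext x
      simp only [Set.mem_diff, Set.mem_union]
      tauto
end

section
/- There exists a family (X_i)_{i∈[0,1]} of subsets of the real line ℝ such that: (1) X_i ∩ X_{i'} = ∅ whenever i ≠ i'; (2) for every i ∈ [0,1] and every closed set F ⊆ ℝ with λ(F) > 0, the cardinality of X_i ∩ F equals the cardinality of the continuum 𝔠; (3) for every I' ⊆ [0,1] and every g ∈ ℝ, the cardinality of the symmetric difference (g + ⋃_{i∈I'} X_i) Δ (⋃_{i∈I'} X_i) is strictly less than 𝔠. -/
open MeasureTheory Set Cardinal Submodule

noncomputable section Stmt10Aux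

namespace Stmt10

/-- The unit interval as a subtype, used as index set. -/
abbrev I01 : Type := ↥(Set.Icc (0 : ℝ) 1)

/-- The collection of closed sets of positive measure. -/
def Cl : Type := {F : Set ℝ // IsClosed F ∧ 0 < volume F}

/-- Closed sets of positive Lebesgue measure have cardinality continuum. -/
lemma continuum_le_mk_closed {F : Set ℝ} (hcl : IsClosed F) (hpos : 0 < volume F) :
    Cardinal.continuum ≤ #F := by
  have hunc : ¬ F.Countable := by
    intro h
    rw [h.measure_zero volume] at hpos
    exact lt_irrefl 0 hpos
  obtain ⟨f, hrange, -, hinj⟩ := hcl.exists_nat_bool_injection_of_not_countable hunc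
  have h1 : #(ℕ → Bool) ≤ #F :=
    mk_le_of_injective (f := fun x => (⟨f x, hrange ⟨x, rfl⟩⟩ : F))
      (fun a b hab => hinj (congrArg Subtype.val hab))
  calc Cardinal.continuum = 2 ^ ℵ₀ := two_power_aleph0.symm
    _ = #(ℕ → Bool) := by rw [← mk_bool, ← mk_nat, power_def]
    _ ≤ #F := h1

lemma mk_Cl_le : #Cl ≤ Cardinal.continuum := by
  have hinj : Function.Injective
      (fun F : Cl => (fun q : ℚ => Metric.infDist (q : ℝ) F.1)) := by
    intro F G h
    have hFne : F.1.Nonempty := nonempty_of_measure_ne_zero (ne_of_gt F.2.2)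
    have hGne : G.1.Nonempty := nonempty_of_measure_ne_zero (ne_of_gt G.2.2)
    have hfun : (fun x : ℝ => Metric.infDist x F.1) = fun x => Metric.infDist x G.1 := by
      apply Continuous.ext_on (Rat.denseRange_cast (𝕜 := ℝ))
        (Metric.continuous_infDist_pt _) (Metric.continuous_infDist_pt _)
      rintro _ ⟨q, rfl⟩
      exact congrFun h q
    apply Subtype.ext
    ext x
    rw [F.2.1.mem_iff_infDist_zero hFne, G.2.1.mem_iff_infDist_zero hGne,
      show Metric.infDist x F.1 = Metric.infDist x G.1 from congrFun hfun x]
  calc #Cl ≤ #(ℚ → ℝ) := mk_le_of_injective hinj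
    _ = #ℝ ^ #ℚ := (power_def ℝ ℚ).symm
    _ = Cardinal.continuum := by
        rw [mk_real, mk_denumerable ℚ, continuum_power_aleph0]

/-- The span over `ℚ` of a set of size `< 𝔠` has size `< 𝔠`. -/
lemma mk_span_lt {s : Set ℝ} (hs : #s < Cardinal.continuum) :
    #(span ℚ s : Set ℝ) < Cardinal.continuum := by
  rcases s.eq_empty_or_nonempty with rfl | hne
  · rw [span_empty]
    have : ((⊥ : Submodule ℚ ℝ) : Set ℝ) = {0} := Submodule.bot_coe
    rw [this, mk_singleton]
    exact one_lt_aleph0.trans aleph0_lt_continuum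
  · have : Nonempty s := hne.to_subtype
    have hsur : #(span ℚ s : Set ℝ) ≤ #(s →₀ ℚ) := by
      apply mk_le_of_surjective (f := fun l : s →₀ ℚ =>
        (⟨Finsupp.linearCombination ℚ ((↑) : s → ℝ) l, by
          exact (Finsupp.mem_span_iff_linearCombination ℚ s _).2 ⟨l, rfl⟩⟩ : (span ℚ s : Set ℝ)))
      rintro ⟨x, hx⟩
      obtain ⟨l, hl⟩ := (Finsupp.mem_span_iff_linearCombination ℚ s x).1 hx
      exact ⟨l, Subtype.ext hl⟩
    have h2 : #(s →₀ ℚ) ≤ #(Finset (s × ℚ)) :=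
      mk_le_of_injective (Finsupp.graph_injective _ _)
    have h3 : #(Finset (s × ℚ)) = #(s × ℚ) := mk_finset_of_infinite _
    have h4 : #(s × ℚ) < Cardinal.continuum := by
      rw [mk_prod, lift_id, lift_id, mk_denumerable ℚ]
      exact mul_lt_of_lt aleph0_le_continuum hs aleph0_lt_continuum
    exact lt_of_le_of_lt (hsur.trans (h2.trans_eq h3)) h4

/-- The well-ordered index type of order type `ord 𝔠`. -/
def ii : Type := Cardinal.continuum.ord.ToType

noncomputable instance : LinearOrder ii := linearOrder_toType _

instance : WellFoundedLT ii := wellFoundedLT_toType _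

lemma mk_ii : #ii = Cardinal.continuum := by
  rw [show #ii = #Cardinal.continuum.ord.ToType from rfl, Cardinal.mk_toType, Cardinal.card_ord]

lemma mk_Iio_ii_lt (t : ii) : #(Set.Iio t) < Cardinal.continuum :=
  Cardinal.mk_Iio_toType_ord_lt (c := Cardinal.continuum) t

lemma mk_Iic_ii_lt (t : ii) : #(Set.Iic t) < Cardinal.continuum := by
  rw [← Set.Iio_insert]
  exact lt_of_le_of_lt mk_insert_le
    (add_lt_of_lt aleph0_le_continuum (mk_Iio_ii_lt t) (one_lt_aleph0.trans aleph0_lt_continuum))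

def i₀ : I01 := ⟨0, Set.mem_Icc.2 ⟨le_rfl, zero_le_one⟩⟩

def F₀ : Cl := ⟨Set.Icc 0 1, isClosed_Icc, by
  rw [Real.volume_Icc]
  norm_num⟩

lemma mk_J : #(Cl × I01 × ℝ) = Cardinal.continuum := by
  apply le_antisymm
  · rw [mk_prod, mk_prod, lift_id, lift_id, lift_id, lift_id, mk_real]
    calc #Cl * (#I01 * Cardinal.continuum)
        ≤ Cardinal.continuum * (Cardinal.continuum * Cardinal.continuum) := by
          gcongr
          · exact mk_Cl_le
          · exact (mk_subtype_le _).trans_eq mk_real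
      _ = Cardinal.continuum := by
          rw [mul_eq_self aleph0_le_continuum, mul_eq_self aleph0_le_continuum]
  · rw [← mk_real]
    exact mk_le_of_injective (f := fun t : ℝ => (F₀, i₀, t))
      (fun a b hab => congrArg (fun p : Cl × I01 × ℝ => p.2.2) hab)

/-- A bijection between the well-ordered index type and the set of tasks. -/
def equivJ : ii ≃ Cl × I01 × ℝ :=
  Classical.choice (Cardinal.eq.1 (mk_ii.trans mk_J.symm))

/-- Key extension step: any closed set of positive measure contains a point outside
the `ℚ`-span of any set of size `< 𝔠`. -/
lemma key (Fd : Cl) (s : Set ℝ) (hs : #s < Cardinal.continuum) :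
    ∃ x, x ∈ Fd.1 ∧ x ∉ span ℚ s := by
  by_contra hcon
  push_neg at hcon
  have hsub : Fd.1 ⊆ (span ℚ s : Set ℝ) := fun x hx => hcon x hx
  have := (continuum_le_mk_closed Fd.2.1 Fd.2.2).trans (mk_le_mk_of_subset hsub)
  exact absurd this (not_le.2 (mk_span_lt hs))

lemma small_range (ξ : ii) (ih : ∀ k, k < ξ → ℝ) :
    #(Set.range fun k : {k : ii // k < ξ} => ih k.1 k.2) < Cardinal.continuum :=
  lt_of_le_of_lt mk_range_le (mk_Iio_ii_lt ξ)

/-- The transfinite recursion: at each step pick a point of the prescribed closed set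
outside the span of the previously chosen points. -/
def e : ii → ℝ :=
  WellFounded.fix (IsWellFounded.wf (r := ((· < ·) : ii → ii → Prop)))
    (fun ξ ih => Classical.choose (key (equivJ ξ).1
      (Set.range fun k : {k : ii // k < ξ} => ih k.1 k.2) (small_range ξ ih)))

lemma espec (ξ : ii) : e ξ ∈ (equivJ ξ).1.1 ∧
    e ξ ∉ span ℚ (Set.range fun k : {k : ii // k < ξ} => e k.1) := by
  unfold e
  rw [WellFounded.fix_eq]
  exact Classical.choose_spec
    (key (equivJ ξ).1 (Set.range fun k : {k : ii // k < ξ} => e k.1)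
      (small_range ξ fun y _ => e y))

lemma e_inj : Function.Injective e := by
  have h : ∀ a b : ii, a < b → e a ≠ e b := by
    intro a b hab heq
    apply (espec b).2
    rw [← heq]
    exact subset_span ⟨⟨a, hab⟩, rfl⟩
  intro a b hab
  by_contra hne
  rcases Ne.lt_or_gt hne with hlt | hlt
  · exact h a b hlt hab
  · exact h b a hlt hab.symm

lemma e_li : LinearIndependent ℚ e := by
  rw [linearIndependent_iff]
  intro l hl
  by_contra hne
  have hsupp : l.support.Nonempty := Finsupp.support_nonempty_iff.2 hne
  set ξ := l.support.max' hsupp with hξ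
  have hmem : ξ ∈ l.support := l.support.max'_mem hsupp
  have hlξ : l ξ ≠ 0 := Finsupp.mem_support_iff.1 hmem
  apply (espec ξ).2
  rw [Finsupp.linearCombination_apply, Finsupp.sum] at hl
  have hsum : l ξ • e ξ + ∑ k ∈ l.support.erase ξ, l k • e k = 0 := by
    rw [Finset.add_sum_erase l.support (fun k => l k • e k) hmem]
    exact hl
  have h1 : l ξ • e ξ = -∑ k ∈ l.support.erase ξ, l k • e k :=
    eq_neg_of_add_eq_zero_left hsum
  have h2 : e ξ = (l ξ)⁻¹ • (l ξ • e ξ) := by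
    rw [smul_smul, inv_mul_cancel₀ hlξ, one_smul]
  rw [h2, h1]
  apply Submodule.smul_mem
  apply Submodule.neg_mem
  apply Submodule.sum_mem
  intro k hk
  apply Submodule.smul_mem
  apply Submodule.subset_span
  have hklt : k < ξ :=
    lt_of_le_of_ne (l.support.le_max' k (Finset.mem_of_mem_erase hk))
      (Finset.ne_of_mem_erase hk)
  exact ⟨⟨k, hklt⟩, rfl⟩

lemma hli : LinearIndependent ℚ ((↑) : Set.range e → ℝ) := by exact (linearIndepOn_id_range_iff e_inj).2 e_li

/-- Extend the range of `e` to a `ℚ`-basis of `ℝ`. -/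
def Bset : Set ℝ := LinearIndepOn.extend (show LinearIndepOn ℚ id (Set.range e) from hli) (Set.subset_univ _)

lemma range_subset_B : Set.range e ⊆ Bset := LinearIndepOn.subset_extend (show LinearIndepOn ℚ id (Set.range e) from hli) _

def bb0 : Module.Basis ↥Bset ℚ ℝ := Module.Basis.extend hli

lemma bb0_apply (x : ↥Bset) : bb0 x = ↑x := Module.Basis.extend_apply_self hli x

lemma mk_B : #↥Bset = Cardinal.continuum := by
  apply le_antisymm
  · exact (mk_subtype_le _).trans_eq mk_real
  · calc Cardinal.continuum = #ii := mk_ii.symm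
      _ = #(Set.range e) := (mk_range_eq e e_inj).symm
      _ ≤ #↥Bset := mk_le_mk_of_subset range_subset_B

def eB : ↥Bset ≃ ii := Classical.choice (Cardinal.eq.1 (mk_B.trans mk_ii.symm))

/-- The basis reindexed by the well-ordered index type. -/
def bb : Module.Basis ii ℚ ℝ := bb0.reindex eB

lemma bb_apply (β : ii) : bb β = ↑(eB.symm β) := by
  rw [bb, Module.Basis.reindex_apply, bb0_apply]

/-- The colour of a basis index: the label attached to the stage at which the basis
vector was chosen (junk value for the auxiliary basis vectors). -/
def color : ii → I01 := fun β =>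
  letI := Classical.dec (∃ ζ : ii, e ζ = (eB.symm β : ℝ))
  if h : ∃ ζ : ii, e ζ = (eB.symm β : ℝ) then (equivJ (Classical.choose h)).2.1 else i₀

/-- The "leading index" of a real number with respect to the basis `bb`. -/
def m : ℝ → WithBot ii := fun x => (bb.repr x).support.max

/-- The colouring of the reals: colour of the leading basis index. -/
def c : ℝ → I01 := fun x => WithBot.recBotCoe i₀ color (m x)

lemma m_add {g x : ℝ} (h : m g < m x) : m (x + g) = m x := by
  classical
  have hne : ((bb.repr x).support).Nonempty := by
    by_contra hemp
    rw [Finset.not_nonempty_iff_eq_empty] at hemp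
    have : m x = ⊥ := by simp only [m]; rw [hemp, Finset.max_empty]
    rw [this] at h
    exact not_lt_bot h
  set M := (bb.repr x).support.max' hne with hM
  have hMx : (M : WithBot ii) = m x := Finset.coe_max' hne
  have hMg : M ∉ (bb.repr g).support := by
    intro hmem
    have h1 : (M : WithBot ii) ≤ m g := Finset.le_max hmem
    rw [hMx] at h1
    exact absurd h1 (not_le.2 h)
  have hcoeff : (bb.repr (x + g)) M ≠ 0 := by
    rw [map_add, Finsupp.add_apply, Finsupp.notMem_support_iff.1 hMg, add_zero]
    exact Finsupp.mem_support_iff.1 (Finset.max'_mem _ hne)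
  have hMmem : M ∈ (bb.repr (x + g)).support := Finsupp.mem_support_iff.2 hcoeff
  apply le_antisymm
  · calc m (x + g) ≤ ((bb.repr x).support ∪ (bb.repr g).support).max := by
          apply Finset.max_mono
          rw [map_add]
          exact Finsupp.support_add
      _ = m x ⊔ m g := Finset.max_union
      _ ≤ m x := sup_le le_rfl h.le
  · rw [← hMx]
    exact Finset.le_max hMmem

lemma c_add {g x : ℝ} (h : m g < m x) : c (x + g) = c x := by
  simp only [c]
  rw [m_add h]

/-- The exceptional set of a translation. -/
def Eg (g : ℝ) : Set ℝ := ↑(span ℚ (bb '' {β : ii | (β : WithBot ii) ≤ m g}))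

lemma D_subset (g : ℝ) : {x : ℝ | c (x + g) ≠ c x} ⊆ Eg g := by
  intro x hx
  have hle : m x ≤ m g := le_of_not_gt fun hlt => hx (c_add hlt)
  have hmem := Module.Basis.mem_span_repr_support bb x
  apply span_mono (Set.image_mono ?_) hmem
  intro β hβ
  exact le_trans (Finset.le_max (Finset.mem_coe.1 hβ)) hle

lemma mk_Eg_lt (g : ℝ) : #(Eg g) < Cardinal.continuum := by
  apply mk_span_lt
  apply lt_of_le_of_lt mk_image_le
  cases hmg : m g with
  | bot =>
    have h0 : {β : ii | (β : WithBot ii) ≤ (⊥ : WithBot ii)} = ∅ := by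
      ext β
      simp only [Set.mem_setOf_eq, Set.mem_empty_iff_false, iff_false, le_bot_iff]
      exact WithBot.coe_ne_bot
    rw [h0, mk_emptyCollection]
    exact continuum_pos
  | coe t =>
    have h0 : {β : ii | (β : WithBot ii) ≤ ((t : WithBot ii))} = Set.Iic t := by
      ext β
      simp [Set.mem_Iic, WithBot.coe_le_coe]
    rw [h0]
    exact mk_Iic_ii_lt t

lemma c_e (ζ : ii) : c (e ζ) = (equivJ ζ).2.1 := by
  have hB : e ζ ∈ Bset := range_subset_B ⟨ζ, rfl⟩
  set β : ii := eB ⟨e ζ, hB⟩ with hβ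
  have hval : ((eB.symm β : ↥Bset) : ℝ) = e ζ := by rw [hβ, Equiv.symm_apply_apply]
  have hbb : bb β = e ζ := by rw [bb_apply, hval]
  have hm : m (e ζ) = (β : WithBot ii) := by
    simp only [m]
    rw [← hbb, Module.Basis.repr_self, Finsupp.support_single_ne_zero _ one_ne_zero,
      Finset.max_singleton]
  simp only [c]
  rw [hm]
  show color β = _
  simp only [color]
  have hex : ∃ ζ' : ii, e ζ' = (eB.symm β : ℝ) := ⟨ζ, hval.symm⟩
  rw [dif_pos hex]
  have hspec := Classical.choose_spec hex
  have hζ : Classical.choose hex = ζ := e_inj (by rw [hspec, hval])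
  rw [hζ]

lemma e_in_F (ζ : ii) : e ζ ∈ (equivJ ζ).1.1 := (espec ζ).1

end Stmt10

end Stmt10Aux

open Stmt10

/-- there is a family `(X_i)_{i ∈ [0,1]}` of pairwise disjoint subsets
of `ℝ` such that each `X_i` meets every closed set of positive Lebesgue measure in a
set of cardinality continuum, and every union `⋃_{i ∈ I'} X_i` is almost invariant
under every translation (the symmetric difference has cardinality `< 𝔠`). -/
theorem stmt10 :
    ∃ X : ↥(Set.Icc (0 : ℝ) 1) → Set ℝ,
      (∀ i i', i ≠ i' → X i ∩ X i' = ∅) ∧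
      (∀ i (F : Set ℝ), IsClosed F → 0 < volume F →
        Cardinal.mk ↥(X i ∩ F) = Cardinal.continuum) ∧
      (∀ (I' : Set ↥(Set.Icc (0 : ℝ) 1)) (g : ℝ),
        Cardinal.mk ↥(symmDiff ((fun x => g + x) '' ⋃ i ∈ I', X i) (⋃ i ∈ I', X i))
          < Cardinal.continuum) := by
  classical
  refine ⟨fun i => {x | c x = i}, ?_, ?_, ?_⟩
  · -- pairwise disjoint
    intro i i' hne
    ext x
    simp only [Set.mem_inter_iff, Set.mem_setOf_eq, Set.mem_empty_iff_false, iff_false]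
    rintro ⟨h1, h2⟩
    exact hne (h1 ▸ h2 ▸ rfl)
  · -- meets every closed set of positive measure in continuum many points
    intro i F hcl hpos
    set Fd : Cl := ⟨F, hcl, hpos⟩ with hFd
    have hφmem : ∀ t : ℝ, e (equivJ.symm (Fd, i, t)) ∈ {x | c x = i} ∩ F := by
      intro t
      constructor
      · have := c_e (equivJ.symm (Fd, i, t))
        rw [Equiv.apply_symm_apply] at this
        exact this
      · have := e_in_F (equivJ.symm (Fd, i, t))
        rw [Equiv.apply_symm_apply] at this
        exact this
    have hφinj : Function.Injective
        (fun t : ℝ => (⟨e (equivJ.symm (Fd, i, t)), hφmem t⟩ : ↥({x | c x = i} ∩ F))) := by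
      intro a b hab
      have h1 : e (equivJ.symm (Fd, i, a)) = e (equivJ.symm (Fd, i, b)) :=
        congrArg Subtype.val hab
      have h2 : equivJ.symm (Fd, i, a) = equivJ.symm (Fd, i, b) := e_inj h1
      have h3 : (Fd, i, a) = (Fd, i, b) := equivJ.symm.injective h2
      exact congrArg (fun p : Cl × _ × ℝ => p.2.2) h3
    apply le_antisymm
    · exact (mk_subtype_le _).trans_eq Cardinal.mk_real
    · calc Cardinal.continuum = #ℝ := Cardinal.mk_real.symm
        _ ≤ #↥({x | c x = i} ∩ F) := Cardinal.mk_le_of_injective hφinj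
  · -- almost invariance of unions
    intro I' g
    have hY : ∀ x : ℝ, (x ∈ ⋃ i ∈ I', {y : ℝ | c y = i}) ↔ c x ∈ I' := by
      intro x
      simp only [Set.mem_iUnion, Set.mem_setOf_eq, exists_prop]
      exact ⟨fun ⟨i, hi, hx⟩ => hx ▸ hi, fun h => ⟨c x, h, rfl⟩⟩
    have hsub : symmDiff ((fun x => g + x) '' ⋃ i ∈ I', {y : ℝ | c y = i})
        (⋃ i ∈ I', {y : ℝ | c y = i}) ⊆ (fun x => g + x) '' {z : ℝ | c (z + g) ≠ c z} := by
      intro x hx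
      rcases Set.mem_symmDiff.1 hx with ⟨hx1, hx2⟩ | ⟨hx1, hx2⟩
      · obtain ⟨y, hy, rfl⟩ := hx1
        rw [hY] at hy
        refine ⟨y, ?_, rfl⟩
        intro hEq
        apply hx2
        rw [hY]
        rw [show y + g = g + y from add_comm y g] at hEq
        rw [← hEq] at hy
        -- careful: hEq : c (g + y) = c y; hy : c y ∈ I'; want c (g+y) ∈ I'
        exact hy
      · rw [hY] at hx1
        refine ⟨x - g, ?_, by ring⟩
        intro hEq
        apply hx2
        refine ⟨x - g, ?_, by ring⟩
        rw [hY]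
        rw [show x - g + g = x by ring] at hEq
        rw [← hEq]
        exact hx1
    calc #↥(symmDiff ((fun x => g + x) '' ⋃ i ∈ I', {y : ℝ | c y = i})
            (⋃ i ∈ I', {y : ℝ | c y = i}))
        ≤ #↥((fun x => g + x) '' {z : ℝ | c (z + g) ≠ c z}) :=
          Cardinal.mk_le_mk_of_subset hsub
      _ ≤ #↥{z : ℝ | c (z + g) ≠ c z} := Cardinal.mk_image_le
      _ ≤ #↥(Eg g) := Cardinal.mk_le_mk_of_subset (D_subset g)
      _ < Cardinal.continuum := mk_Eg_lt g
end

section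
/- If E is an infinite set satisfying card(E^{ℵ₀}) = card(E), then there exists a strictly ℵ₀-independent family (A_i)_{i∈I} of subsets of E with card(I) = 2^{card(E)}. -/
universe u

noncomputable section Stmt13Aux

variable (E : Type u) [Infinite E]

/-- Ground set for the Hausdorff σ-independent family construction. -/
def Stmt13Om : Type u := (ℕ → E) × (ℕ → ℕ → ULift.{u} Bool)

def stmt13toFun : Stmt13Om E → ℕ → E := fun p n =>
  if n.unpair.1 = 0 then p.1 n.unpair.2
  else Infinite.natEmbedding E (if (p.2 (n.unpair.1 - 1) n.unpair.2).down then 1 else 0)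

lemma stmt13toFun_inj : Function.Injective (stmt13toFun E) := by
  intro p q h
  have h1 : p.1 = q.1 := by
    funext m
    have := congrFun h (Nat.pair 0 m)
    simpa [stmt13toFun, Nat.unpair_pair] using this
  have h2 : p.2 = q.2 := by
    funext k m
    have := congrFun h (Nat.pair (k + 1) m)
    simp [stmt13toFun, Nat.unpair_pair] at this
    apply ULift.ext
    by_cases hp : (p.2 k m).down <;> by_cases hq : (q.2 k m).down <;>
      simp [hp, hq] at this ⊢
  exact Prod.ext h1 h2

end Stmt13Aux

/-- if `E` is an infinite set with `card(E^ℵ₀) = card(E)`, then there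
is a strictly ℵ₀-independent family `(A_i)_{i ∈ I}` of subsets of `E` with
`card(I) = 2^{card(E)}`: for every countable `J ⊆ I` and every choice of `A_i` or its
complement for `i ∈ J`, the corresponding intersection is nonempty. -/
theorem stmt13 (E : Type u) [Infinite E]
    (hcard : Cardinal.mk (ℕ → E) = Cardinal.mk E) :
    ∃ (I : Type u) (A : I → Set E),
      Cardinal.mk I = 2 ^ Cardinal.mk E ∧
      ∀ (J : Set I), J.Countable → ∀ c : I → Bool,
        (⋂ i ∈ J, (if c i then A i else (A i)ᶜ)).Nonempty := by
  classical
  obtain ⟨q⟩ := Cardinal.eq.mp hcard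
  have emb1 : Stmt13Om E ↪ E :=
    (⟨stmt13toFun E, stmt13toFun_inj E⟩ : Stmt13Om E ↪ (ℕ → E)).trans q.toEmbedding
  have emb2 : E ↪ Stmt13Om E :=
    ⟨fun x => ⟨fun _ => x, fun _ _ => ⟨false⟩⟩, by
      intro a b h; exact congrFun (congrArg Prod.fst h) 0⟩
  obtain ⟨e⟩ := emb2.antisymm emb1
  refine ⟨Set E, fun S => {x | ∃ n, ∀ m, ((e x).2 n m).down = true ↔ (e x).1 m ∈ S},
    Cardinal.mk_set, ?_⟩
  intro J hJ c
  rcases J.eq_empty_or_nonempty with rfl | hne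
  · simp [Set.Nonempty]
  obtain ⟨f, rfl⟩ := Set.Countable.exists_eq_range hJ hne
  -- separating sequence
  have sep : ∀ n : ℕ, ∃ x : E,
      f n.unpair.1 ≠ f n.unpair.2 → ¬(x ∈ f n.unpair.1 ↔ x ∈ f n.unpair.2) := by
    intro n
    by_cases h : f n.unpair.1 = f n.unpair.2
    · exact ⟨Classical.arbitrary E, fun h' => absurd h h'⟩
    · have hx : ∃ x, ¬(x ∈ f n.unpair.1 ↔ x ∈ f n.unpair.2) := by
        by_contra h'
        push_neg at h'
        exact h (Set.ext fun x => h' x)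
      obtain ⟨x, hx⟩ := hx
      exact ⟨x, fun _ => hx⟩
  choose s hs using sep
  set T : ℕ → Set ℕ := fun k => {m | s m ∈ f k} with hT
  have Tinj : ∀ k l, f k ≠ f l → T k ≠ T l := by
    intro k l hkl hTeq
    have h1 := hs (Nat.pair k l)
    rw [Nat.unpair_pair] at h1
    apply h1 hkl
    constructor
    · intro h
      have hm : Nat.pair k l ∈ T k := h
      rw [hTeq] at hm
      exact hm
    · intro h
      have hm : Nat.pair k l ∈ T l := h
      rw [← hTeq] at hm
      exact hm
  set D : Set ℕ := {m | m ∉ T m} with hD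
  set σ : ℕ → ℕ → ULift.{u} Bool := fun n m =>
    if c (f n) then ⟨decide (m ∈ T n)⟩ else ⟨decide (m ∈ D)⟩ with hσ
  refine ⟨e.symm (s, σ), ?_⟩
  simp only [Set.mem_iInter]
  intro i hi
  obtain ⟨k, rfl⟩ := hi
  have he : e (e.symm (s, σ)) = (s, σ) := e.apply_symm_apply _
  by_cases hc : c (f k)
  · rw [if_pos hc]
    refine ⟨k, fun m => ?_⟩
    rw [he]
    simp [hσ, hc, hT]
  · rw [if_neg (by simpa using hc)]
    intro hmem
    obtain ⟨n, hn⟩ := hmem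
    rw [he] at hn
    by_cases hcn : c (f n)
    · have hTeq : T n = T k := Set.ext fun m => by
        have h := hn m
        simp [hσ, hcn] at h
        simpa [hT] using h
      exact Tinj n k (fun h => hc (h ▸ hcn)) hTeq
    · have h := hn k
      simp [hσ, hcn, hD, hT] at h
end

section
/- Let E be a set, let G be a group of bijections of E (acting on E) which contains an uncountable subgroup acting freely on E (i.e., a subgroup H with card(H) > ℵ₀ such that every h ∈ H other than the identity has no fixed point in E), and let X be an arbitrary subset of E. Then the following two conditions are equivalent: (1) X is a G-absolutely negligible subset of E; (2) for every countable G-configuration X' of X there exists a sequence (h_k)_{k∈ℕ} of elements of G such that ⋂_{k∈ℕ} h_k(X') = ∅. -/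
open MeasureTheory

universe u

variable {E : Type u}

/-- `μ` is a nonzero σ-finite countably additive measure, defined on a σ-algebra `m`
of subsets of `E`, which is invariant under the group `G` of bijections of `E`. -/
def IsInvariantSigmaFiniteMeasure (G : Subgroup (Equiv.Perm E))
    (m : MeasurableSpace E) (μ : @Measure E m) : Prop :=
  μ ≠ 0 ∧
  (∃ f : ℕ → Set E, (∀ k, MeasurableSet[m] (f k) ∧ μ (f k) ≠ ⊤) ∧
    (⋃ k, f k) = Set.univ) ∧
  (∀ g : Equiv.Perm E, g ∈ G → ∀ A : Set E, MeasurableSet[m] A →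
    MeasurableSet[m] (g '' A) ∧ μ (g '' A) = μ A)

/-- `X ⊆ E` is `G`-absolutely negligible: every `G`-invariant σ-finite measure on `E`
admits a `G`-invariant extension measuring `X` as zero. -/
def IsAbsolutelyNegligible (G : Subgroup (Equiv.Perm E)) (X : Set E) : Prop :=
  ∀ (m : MeasurableSpace E) (μ : @Measure E m),
    IsInvariantSigmaFiniteMeasure G m μ →
    ∃ (m' : MeasurableSpace E) (ν : @Measure E m'),
      m ≤ m' ∧ MeasurableSet[m'] X ∧
      (∀ A : Set E, MeasurableSet[m] A → ν A = μ A) ∧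
      ν X = 0 ∧
      (∀ g : Equiv.Perm E, g ∈ G → ∀ A : Set E, MeasurableSet[m'] A →
        MeasurableSet[m'] (g '' A) ∧ ν (g '' A) = ν A)

/-- `X'` is a countable `G`-configuration of `X`. -/
def IsCountableConfiguration (G : Subgroup (Equiv.Perm E)) (X X' : Set E) : Prop :=
  ∃ g : ℕ → Equiv.Perm E, (∀ k, g k ∈ G) ∧ X' ⊆ ⋃ k, g k '' X

namespace Stmt15Aux

open Set

/-- image under a product of permutations -/
lemma image_mul (g h : Equiv.Perm E) (s : Set E) : (g * h) '' s = g '' (h '' s) := by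
  rw [← Set.image_comp]; rfl

lemma image_inv_image (g : Equiv.Perm E) (s : Set E) : g '' (⇑(g⁻¹) '' s) = s := by
  rw [Equiv.Perm.inv_def]
  have := Equiv.symm_image_image g.symm s
  simpa using this

lemma inv_image_image (g : Equiv.Perm E) (s : Set E) : ⇑(g⁻¹) '' (g '' s) = s := by
  rw [Equiv.Perm.inv_def]; exact Equiv.symm_image_image g s

lemma image_one (s : Set E) : (1 : Equiv.Perm E) '' s = s := by
  simp


/-- KEY LEMMA: there is a countable subset `S` of `G` containing `1` whose saturation
`U = ⋃ s ∈ S, s '' B` of a measurable set `B` is almost invariant under all of `G`: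
`μ (U \ g '' U) = 0` for every `g ∈ G`. -/
lemma keyLemma {m : MeasurableSpace E} (G : Subgroup (Equiv.Perm E)) (μ : @Measure E m)
    (hinv : ∀ g : Equiv.Perm E, g ∈ G → ∀ A : Set E, MeasurableSet[m] A →
      MeasurableSet[m] (g '' A) ∧ μ (g '' A) = μ A)
    (f : ℕ → Set E) (hf : ∀ k, MeasurableSet[m] (f k) ∧ μ (f k) ≠ ⊤)
    (hfU : (⋃ k, f k) = Set.univ)
    (B : Set E) (hB : MeasurableSet[m] B) :
    ∃ S : Set (Equiv.Perm E), S.Countable ∧ (∀ s ∈ S, s ∈ G) ∧ (1 : Equiv.Perm E) ∈ S ∧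
      ∀ g : Equiv.Perm E, g ∈ G →
        μ ((⋃ s ∈ S, s '' B) \ g '' (⋃ s ∈ S, s '' B)) = 0 := by
  classical
  -- the collection of admissible countable subsets
  let P := {S : Set (Equiv.Perm E) // S.Countable ∧ (∀ s ∈ S, s ∈ G) ∧
    (1 : Equiv.Perm E) ∈ S}
  let U : Set (Equiv.Perm E) → Set E := fun S => ⋃ s ∈ S, s '' B
  have hUmeas : ∀ S : P, MeasurableSet[m] (U S.1) := fun S =>
    MeasurableSet.biUnion S.2.1 (fun s hs => (hinv s (S.2.2.1 s hs) B hB).1)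
  have hUmono : ∀ (S T : Set (Equiv.Perm E)), S ⊆ T → U S ⊆ U T := by
    intro S T hST
    exact Set.biUnion_subset_biUnion_left hST
  -- the suprema
  let r : ℕ → ENNReal := fun j => ⨆ S : P, μ (U S.1 ∩ f j)
  have hrle : ∀ j, r j ≤ μ (f j) := by
    intro j
    exact iSup_le (fun S => measure_mono Set.inter_subset_right)
  have hrtop : ∀ j, r j ≠ ⊤ := fun j => fun h => (hf j).2 (top_le_iff.mp (h ▸ hrle j))
  -- choose approximating sets
  have hach : ∀ j n : ℕ, ∃ S : P, r j ≤ μ (U S.1 ∩ f j) + ((n : ENNReal) + 1)⁻¹ := by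
    intro j n
    by_cases h0 : r j = 0
    · exact ⟨⟨{1}, Set.countable_singleton _, by rintro s rfl; exact one_mem G, rfl⟩,
        by rw [h0]; exact zero_le⟩
    · have hlt : r j - ((n : ENNReal) + 1)⁻¹ < r j :=
        ENNReal.sub_lt_self (hrtop j) h0 (by simp)
      rw [lt_iSup_iff] at hlt
      obtain ⟨S, hS⟩ := hlt
      exact ⟨S, tsub_le_iff_right.mp hS.le⟩
  choose Sel hSel using hach
  -- the big countable set
  let Sb : Set (Equiv.Perm E) := {1} ∪ ⋃ j, ⋃ n, (Sel j n).1
  have hSbc : Sb.Countable :=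
    (Set.countable_singleton _).union
      (Set.countable_iUnion (fun j => Set.countable_iUnion (fun n => (Sel j n).2.1)))
  have hSbG : ∀ s ∈ Sb, s ∈ G := by
    rintro s (rfl | hs)
    · exact one_mem G
    · simp only [Set.mem_iUnion] at hs
      obtain ⟨j, n, hs⟩ := hs
      exact (Sel j n).2.2.1 s hs
  have hSb1 : (1 : Equiv.Perm E) ∈ Sb := Or.inl rfl
  let SB : P := ⟨Sb, hSbc, hSbG, hSb1⟩
  -- U Sb realizes the supremum
  have hUmax : ∀ j, μ (U Sb ∩ f j) = r j := by
    intro j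
    refine le_antisymm (le_iSup (fun S : P => μ (U S.1 ∩ f j)) SB) ?_
    refine ENNReal.le_of_forall_pos_le_add (fun ε hε hfin => ?_)
    obtain ⟨n, hn⟩ := ENNReal.exists_inv_nat_lt
      (show (ε : ENNReal) ≠ 0 by exact_mod_cast hε.ne')
    have hsub : (Sel j n).1 ⊆ Sb := by
      intro s hs
      exact Or.inr (Set.mem_iUnion.mpr ⟨j, Set.mem_iUnion.mpr ⟨n, hs⟩⟩)
    calc r j ≤ μ (U (Sel j n).1 ∩ f j) + ((n : ENNReal) + 1)⁻¹ := hSel j n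
      _ ≤ μ (U Sb ∩ f j) + ((n : ENNReal) + 1)⁻¹ :=
          add_le_add_left
            (measure_mono (Set.inter_subset_inter_left _ (hUmono _ _ hsub))) _
      _ ≤ μ (U Sb ∩ f j) + (ε : ENNReal) :=
          add_le_add le_rfl (le_trans (ENNReal.inv_le_inv' le_self_add) hn.le)
  -- the final claim
  refine ⟨Sb, hSbc, hSbG, hSb1, fun g hg => ?_⟩
  by_contra hne
  -- the escaping set
  have hUb : MeasurableSet[m] (U Sb) := hUmeas SB
  have hgU : MeasurableSet[m] (⇑(g⁻¹) '' (U Sb)) := (hinv g⁻¹ (inv_mem hg) _ hUb).1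
  let D : Set E := ⇑(g⁻¹) '' (U Sb) \ U Sb
  have hDmeas : MeasurableSet[m] D := hgU.diff hUb
  have hDim : g '' D = U Sb \ g '' (U Sb) := by
    rw [Set.image_diff g.injective, image_inv_image]
  have hDpos : μ D ≠ 0 := by
    intro h0
    apply hne
    rw [← hDim, (hinv g hg D hDmeas).2, h0]
  -- find a piece with positive measure
  have hDj : ∃ j, μ (D ∩ f j) ≠ 0 := by
    by_contra hall
    push_neg at hall
    apply hDpos
    have : D = ⋃ j, D ∩ f j := by
      rw [← Set.inter_iUnion, hfU, Set.inter_univ]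
    rw [this]
    refine le_antisymm ?_ zero_le
    calc μ (⋃ j, D ∩ f j) ≤ ∑' j, μ (D ∩ f j) := measure_iUnion_le (μ := μ) _
      _ = 0 := by simp [hall]
  obtain ⟨j, hj⟩ := hDj
  -- the enlarged admissible set
  let S' : Set (Equiv.Perm E) := Sb ∪ (fun s => g⁻¹ * s) '' Sb
  have hS'P : S'.Countable ∧ (∀ s ∈ S', s ∈ G) ∧ (1 : Equiv.Perm E) ∈ S' :=
    ⟨hSbc.union (hSbc.image _),
     by
      rintro s (hs | ⟨t, ht, rfl⟩)
      · exact hSbG s hs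
      · exact mul_mem (inv_mem hg) (hSbG t ht),
     Or.inl hSb1⟩
  have hUS' : U Sb ∪ ⇑(g⁻¹) '' (U Sb) ⊆ U S' := by
    apply Set.union_subset
    · exact hUmono _ _ Set.subset_union_left
    · intro x hx
      simp only [U, Set.mem_iUnion, Set.image_iUnion] at hx ⊢
      obtain ⟨s, hs, hx⟩ := hx
      exact ⟨g⁻¹ * s, Or.inr ⟨s, hs, rfl⟩, by rwa [image_mul]⟩
  have hbig : r j < μ (U S' ∩ f j) := by
    have hsub : (U Sb ∩ f j) ∪ (D ∩ f j) ⊆ U S' ∩ f j := by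
      apply Set.union_subset
      · exact Set.inter_subset_inter_left _
          ((Set.subset_union_left).trans hUS')
      · exact Set.inter_subset_inter_left _
          ((Set.diff_subset).trans ((Set.subset_union_right).trans hUS'))
    have hdisj : Disjoint (U Sb ∩ f j) (D ∩ f j) := by
      rw [Set.disjoint_left]
      rintro x ⟨hxU, -⟩ ⟨hxD, -⟩
      exact hxD.2 hxU
    calc r j = r j := rfl
      _ < r j + μ (D ∩ f j) := ENNReal.lt_add_right (hrtop j) hj
      _ = μ (U Sb ∩ f j) + μ (D ∩ f j) := by rw [hUmax j]
      _ = μ ((U Sb ∩ f j) ∪ (D ∩ f j)) :=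
          (measure_union hdisj (hDmeas.inter (hf j).1)).symm
      _ ≤ μ (U S' ∩ f j) := measure_mono hsub
  have hle' : μ (U S' ∩ f j) ≤ r j :=
    le_iSup (fun S : P => μ (U S.1 ∩ f j)) ⟨S', hS'P⟩
  exact absurd hle' (not_le.mpr hbig)


/-- CORE LEMMA: under condition (2), every `m`-measurable subset of a countable
`G`-configuration of `X` is `μ`-null. -/
lemma coreNull {m : MeasurableSpace E} (G : Subgroup (Equiv.Perm E)) (μ : @Measure E m)
    (hinv : ∀ g : Equiv.Perm E, g ∈ G → ∀ A : Set E, MeasurableSet[m] A →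
      MeasurableSet[m] (g '' A) ∧ μ (g '' A) = μ A)
    (f : ℕ → Set E) (hf : ∀ k, MeasurableSet[m] (f k) ∧ μ (f k) ≠ ⊤)
    (hfU : (⋃ k, f k) = Set.univ)
    (X : Set E)
    (hmain : ∀ X' : Set E, IsCountableConfiguration G X X' →
      ∃ h : ℕ → Equiv.Perm E, (∀ k, h k ∈ G) ∧ (⋂ k, h k '' X') = ∅)
    (A : Set E) (hA : MeasurableSet[m] A)
    (g0 : ℕ → Equiv.Perm E) (hg0 : ∀ k, g0 k ∈ G)
    (hsub : A ⊆ ⋃ k, g0 k '' X) : μ A = 0 := by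
  classical
  by_contra hApos
  obtain ⟨S, hSc, hSG, hS1, hkey⟩ := keyLemma G μ hinv f hf hfU A hA
  set U : Set E := ⋃ s ∈ S, s '' A with hU
  -- enumerate S
  obtain ⟨e, he⟩ := hSc.exists_eq_range ⟨1, hS1⟩
  -- the configuration
  set q : ℕ → Equiv.Perm E := fun n =>
    e ((Nat.unpair n).1) * g0 ((Nat.unpair n).2) with hq
  have heS : ∀ i, e i ∈ S := fun i => he ▸ Set.mem_range_self i
  have hqG : ∀ n, q n ∈ G := fun n => mul_mem (hSG _ (heS _)) (hg0 _)
  set X' : Set E := ⋃ n, q n '' X with hX'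
  have hUX' : U ⊆ X' := by
    intro x hx
    simp only [hU, Set.mem_iUnion] at hx
    obtain ⟨s, hs, hx⟩ := hx
    rw [he] at hs
    obtain ⟨i, rfl⟩ := hs
    obtain ⟨a, ha, rfl⟩ := hx
    obtain ⟨k, hk⟩ := Set.mem_iUnion.mp (hsub ha)
    obtain ⟨y, hy, hky⟩ := hk
    refine Set.mem_iUnion.mpr ⟨Nat.pair i k, ⟨y, hy, ?_⟩⟩
    simp only [hq, Nat.unpair_pair, Equiv.Perm.mul_apply, hky]
  obtain ⟨h, hhG, hhE⟩ := hmain X' ⟨q, hqG, subset_rfl⟩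
  have hAU : A ⊆ U := by
    intro x hx
    exact Set.mem_biUnion hS1 (by simpa using hx)
  have hnull : ∀ k, μ (A \ h k '' U) = 0 := by
    intro k
    refine le_antisymm (le_trans (measure_mono ?_) (le_of_eq (hkey (h k) (hhG k))))
      zero_le
    exact Set.diff_subset_diff_left hAU
  have hcover : A ⊆ ⋃ k, A \ h k '' U := by
    intro x hx
    have hnotin : x ∉ ⋂ k, h k '' X' := by
      rw [hhE]; exact Set.notMem_empty x
    rw [Set.mem_iInter] at hnotin
    push_neg at hnotin
    obtain ⟨k, hk⟩ := hnotin
    exact Set.mem_iUnion.mpr ⟨k, hx, fun hc => hk (Set.image_mono hUX' hc)⟩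
  apply hApos
  refine le_antisymm ?_ zero_le
  calc μ A ≤ μ (⋃ k, A \ h k '' U) := measure_mono hcover
    _ ≤ ∑' k, μ (A \ h k '' U) := measure_iUnion_le (μ := μ) _
    _ = 0 := by simp [hnull]


/-- The `G`-invariant σ-ideal generated by `X`. -/
def Idl (G : Subgroup (Equiv.Perm E)) (X : Set E) : Set E → Prop := fun Z =>
  ∃ g : ℕ → Equiv.Perm E, (∀ k, g k ∈ G) ∧ Z ⊆ ⋃ k, g k '' X

/-- symmetric difference -/
def sd (B A : Set E) : Set E := (B \ A) ∪ (A \ B)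

section IdealLemmas

variable {G : Subgroup (Equiv.Perm E)} {X : Set E}

lemma idl_mono {Z Z' : Set E} (h : Z' ⊆ Z) (hZ : Idl G X Z) : Idl G X Z' := by
  obtain ⟨g, hg, hs⟩ := hZ
  exact ⟨g, hg, h.trans hs⟩

lemma idl_iUnion (Z : ℕ → Set E) (hZ : ∀ i, Idl G X (Z i)) : Idl G X (⋃ i, Z i) := by
  choose g hg hs using hZ
  refine ⟨fun n => g (Nat.unpair n).1 (Nat.unpair n).2, fun n => hg _ _, ?_⟩
  intro x hx
  obtain ⟨i, hx⟩ := Set.mem_iUnion.mp hx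
  obtain ⟨k, hk⟩ := Set.mem_iUnion.mp (hs i hx)
  refine Set.mem_iUnion.mpr ⟨Nat.pair i k, ?_⟩
  simpa [Nat.unpair_pair] using hk

lemma idl_union {Z1 Z2 : Set E} (h1 : Idl G X Z1) (h2 : Idl G X Z2) :
    Idl G X (Z1 ∪ Z2) := by
  have := idl_iUnion (fun i => if i = 0 then Z1 else Z2)
    (fun i => by
      by_cases h : i = 0
      · simpa [h] using h1
      · simpa [h] using h2)
  refine idl_mono ?_ this
  rintro x (hx | hx)
  · exact Set.mem_iUnion.mpr ⟨0, by simp [hx]⟩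
  · exact Set.mem_iUnion.mpr ⟨1, by simp [hx]⟩

lemma idl_empty : Idl G X ∅ := ⟨fun _ => 1, fun _ => one_mem G, Set.empty_subset _⟩

lemma idl_self : Idl G X X :=
  ⟨fun _ => 1, fun _ => one_mem G, by
    intro x hx; exact Set.mem_iUnion.mpr ⟨0, by simpa using hx⟩⟩

lemma idl_image {g : Equiv.Perm E} (hg : g ∈ G) {Z : Set E} (hZ : Idl G X Z) :
    Idl G X (g '' Z) := by
  obtain ⟨gs, hgs, hsub⟩ := hZ
  refine ⟨fun k => g * gs k, fun k => mul_mem hg (hgs k), ?_⟩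
  intro x hx
  obtain ⟨z, hz, rfl⟩ := hx
  obtain ⟨k, hk⟩ := Set.mem_iUnion.mp (hsub hz)
  obtain ⟨y, hy, hyz⟩ := hk
  exact Set.mem_iUnion.mpr ⟨k, ⟨y, hy, by simp [Equiv.Perm.mul_apply, hyz]⟩⟩

lemma sd_compl (B A : Set E) : sd Bᶜ Aᶜ = sd B A := by
  ext x; simp only [sd, Set.mem_union, Set.mem_diff, Set.mem_compl_iff, not_not]
  tauto

lemma sd_iUnion_subset (B A : ℕ → Set E) :
    sd (⋃ i, B i) (⋃ i, A i) ⊆ ⋃ i, sd (B i) (A i) := by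
  rintro x (⟨hxB, hxA⟩ | ⟨hxA, hxB⟩)
  · obtain ⟨i, hi⟩ := Set.mem_iUnion.mp hxB
    exact Set.mem_iUnion.mpr ⟨i, Or.inl ⟨hi, fun c => hxA (Set.mem_iUnion.mpr ⟨i, c⟩)⟩⟩
  · obtain ⟨i, hi⟩ := Set.mem_iUnion.mp hxA
    exact Set.mem_iUnion.mpr ⟨i, Or.inr ⟨hi, fun c => hxB (Set.mem_iUnion.mpr ⟨i, c⟩)⟩⟩

lemma sd_self (B : Set E) : sd B B = ∅ := by simp [sd]

lemma sd_empty_right (B : Set E) : sd B ∅ = B := by simp [sd]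

lemma subset_union_sd (B A : Set E) : A ⊆ B ∪ sd B A := by
  intro x hx
  by_cases hB : x ∈ B
  · exact Or.inl hB
  · exact Or.inr (Or.inr ⟨hx, hB⟩)

lemma sd_triangle (B A1 A2 : Set E) : sd A1 A2 ⊆ sd B A1 ∪ sd B A2 := by
  rintro x (⟨h1, h2⟩ | ⟨h2, h1⟩) <;> by_cases hB : x ∈ B
  · exact Or.inr (Or.inl ⟨hB, h2⟩)
  · exact Or.inl (Or.inr ⟨h1, hB⟩)
  · exact Or.inl (Or.inl ⟨hB, h1⟩)
  · exact Or.inr (Or.inr ⟨h2, hB⟩)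

lemma sd_image (g : Equiv.Perm E) (B A : Set E) :
    sd (g '' B) (g '' A) = g '' sd B A := by
  unfold sd
  rw [← Set.image_diff g.injective, ← Set.image_diff g.injective, ← Set.image_union]

end IdealLemmas

/-- The extended σ-algebra. -/
def mExt (G : Subgroup (Equiv.Perm E)) (X : Set E) (m : MeasurableSpace E) :
    MeasurableSpace E where
  MeasurableSet' := fun B => ∃ A, MeasurableSet[m] A ∧ Idl G X (sd B A)
  measurableSet_empty := ⟨∅, MeasurableSet.empty, by rw [sd_self]; exact idl_empty⟩
  measurableSet_compl := by
    rintro B ⟨A, hA, hI⟩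
    exact ⟨Aᶜ, hA.compl, by rwa [sd_compl]⟩
  measurableSet_iUnion := by
    intro B hB
    choose A hA hI using hB
    exact ⟨⋃ i, A i, MeasurableSet.iUnion hA,
      idl_mono (sd_iUnion_subset B A) (idl_iUnion _ hI)⟩

lemma mExt_iff {G : Subgroup (Equiv.Perm E)} {X : Set E} {m : MeasurableSpace E}
    {B : Set E} :
    MeasurableSet[mExt G X m] B ↔ ∃ A, MeasurableSet[m] A ∧ Idl G X (sd B A) :=
  Iff.rfl

/-- Sufficiency: condition (2) implies absolute negligibility. -/
lemma sufficiency (G : Subgroup (Equiv.Perm E)) (X : Set E)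
    (hmain : ∀ X' : Set E, IsCountableConfiguration G X X' →
      ∃ h : ℕ → Equiv.Perm E, (∀ k, h k ∈ G) ∧ (⋂ k, h k '' X') = ∅) :
    IsAbsolutelyNegligible G X := by
  classical
  intro m μ hμ
  obtain ⟨hμ0, ⟨f, hf, hfU⟩, hinv⟩ := hμ
  have idl_null : ∀ Z, MeasurableSet[m] Z → Idl G X Z → μ Z = 0 := by
    rintro Z hZm ⟨gs, hgs, hZs⟩
    exact coreNull G μ hinv f hf hfU X hmain Z hZm gs hgs hZs
  -- well-definedness of the extension
  have wd : ∀ (B A1 A2 : Set E), MeasurableSet[m] A1 → MeasurableSet[m] A2 →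
      Idl G X (sd B A1) → Idl G X (sd B A2) → μ A1 = μ A2 := by
    intro B A1 A2 h1 h2 hI1 hI2
    have hI : Idl G X (sd A1 A2) := idl_mono (sd_triangle B A1 A2) (idl_union hI1 hI2)
    have hd1 : μ (A1 \ A2) = 0 :=
      idl_null _ (h1.diff h2) (idl_mono (fun x hx => Or.inl hx) hI)
    have hd2 : μ (A2 \ A1) = 0 :=
      idl_null _ (h2.diff h1) (idl_mono (fun x hx => Or.inr hx) hI)
    have hle : ∀ (C D : Set E), μ (C \ D) = 0 → μ C ≤ μ D := by
      intro C D h0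
      calc μ C ≤ μ (D ∪ (C \ D)) := measure_mono (fun x hx => by
            by_cases hD : x ∈ D
            · exact Or.inl hD
            · exact Or.inr ⟨hx, hD⟩)
        _ ≤ μ D + μ (C \ D) := measure_union_le _ _
        _ = μ D := by rw [h0, add_zero]
    exact le_antisymm (hle A1 A2 hd1) (hle A2 A1 hd2)
  set m' : MeasurableSpace E := mExt G X m with hm'
  let fν : ∀ s : Set E, MeasurableSet[m'] s → ENNReal := fun s hs =>
    μ (Classical.choose hs)
  have hspec : ∀ (s : Set E) (hs : MeasurableSet[m'] s),
      MeasurableSet[m] (Classical.choose hs) ∧ Idl G X (sd s (Classical.choose hs)) :=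
    fun s hs => Classical.choose_spec hs
  have h0 : ∀ (h : MeasurableSet[m'] (∅ : Set E)), fν ∅ h = 0 := by
    intro h
    obtain ⟨hmeas, hidl⟩ := hspec ∅ h
    refine idl_null _ hmeas (idl_mono ?_ hidl)
    intro x hx
    exact Or.inr ⟨hx, Set.notMem_empty x⟩
  have hadd : ∀ ⦃Bf : ℕ → Set E⦄ (h : ∀ i, MeasurableSet[m'] (Bf i)),
      Pairwise (Function.onFun Disjoint Bf) →
      ∀ (hU : MeasurableSet[m'] (⋃ i, Bf i)),
        fν (⋃ i, Bf i) hU = ∑' i, fν (Bf i) (h i) := by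
    intro Bf h hd hU
    have hA : ∀ i, MeasurableSet[m] (Classical.choose (h i)) := fun i => (hspec _ (h i)).1
    have hI : ∀ i, Idl G X (sd (Bf i) (Classical.choose (h i))) := fun i => (hspec _ (h i)).2
    have hrep : Idl G X (sd (⋃ i, Bf i) (⋃ i, Classical.choose (h i))) :=
      idl_mono (sd_iUnion_subset _ _) (idl_iUnion _ hI)
    have h1 : fν (⋃ i, Bf i) hU = μ (⋃ i, Classical.choose (h i)) :=
      wd (⋃ i, Bf i) _ _ (hspec _ hU).1 (MeasurableSet.iUnion hA) (hspec _ hU).2 hrep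
    rw [h1]
    have hAE : Pairwise (Function.onFun (MeasureTheory.AEDisjoint μ) fun i => Classical.choose (h i)) := by
      intro i j hij
      refine idl_null _ ((hA i).inter (hA j)) (idl_mono ?_ (idl_union (hI i) (hI j)))
      rintro x ⟨hxi, hxj⟩
      by_cases hBi : x ∈ Bf i
      · have hBj : x ∉ Bf j := Set.disjoint_left.mp (hd hij) hBi
        exact Or.inr (Or.inr ⟨hxj, hBj⟩)
      · exact Or.inl (Or.inr ⟨hxi, hBi⟩)
    rw [measure_iUnion₀ hAE (fun i => (hA i).nullMeasurableSet)]
  set ν : @Measure E m' := @Measure.ofMeasurable E m' fν (h0 (@MeasurableSet.empty E m'))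
    (fun Bf h hd => hadd h hd (MeasurableSet.iUnion h)) with hνdef
  have hν : ∀ (s : Set E) (hs : MeasurableSet[m'] s), ν s = fν s hs := by
    intro s hs
    rw [hνdef]
    exact Measure.ofMeasurable_apply s hs
  refine ⟨m', ν, ?_, ?_, ?_, ?_, ?_⟩
  · rw [MeasurableSpace.le_def]
    intro s hs
    exact ⟨s, hs, by rw [sd_self]; exact idl_empty⟩
  · exact ⟨∅, @MeasurableSet.empty E m, by rw [sd_empty_right]; exact idl_self⟩
  · intro A hA
    have hA' : MeasurableSet[m'] A := ⟨A, hA, by rw [sd_self]; exact idl_empty⟩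
    rw [hν A hA']
    exact wd A _ _ (hspec A hA').1 hA (hspec A hA').2 (by rw [sd_self]; exact idl_empty)
  · have hX' : MeasurableSet[m'] X := ⟨∅, @MeasurableSet.empty E m, by rw [sd_empty_right]; exact idl_self⟩
    rw [hν X hX']
    refine idl_null _ (hspec X hX').1 ?_
    exact idl_mono (subset_union_sd X _) (idl_union idl_self (hspec X hX').2)
  · intro g hg B hB
    obtain ⟨A, hAm, hI⟩ := hB
    have hB' : MeasurableSet[m'] B := ⟨A, hAm, hI⟩
    have hgB : MeasurableSet[m'] (g '' B) :=
      ⟨g '' A, (hinv g hg A hAm).1, by rw [sd_image]; exact idl_image hg hI⟩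
    refine ⟨hgB, ?_⟩
    rw [hν _ hgB, hν _ hB']
    calc μ (Classical.choose hgB)
        = μ (g '' A) := wd (g '' B) _ _ (hspec _ hgB).1 (hinv g hg A hAm).1
          (hspec _ hgB).2 (by rw [sd_image]; exact idl_image hg hI)
      _ = μ A := (hinv g hg A hAm).2
      _ = μ (Classical.choose hB') := wd B _ _ hAm (hspec _ hB').1 hI (hspec _ hB').2


/-- Necessity: absolute negligibility implies condition (2). -/
lemma necessity (G : Subgroup (Equiv.Perm E)) (X : Set E)
    (hneg : IsAbsolutelyNegligible G X) :
    ∀ X' : Set E, IsCountableConfiguration G X X' →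
      ∃ h : ℕ → Equiv.Perm E, (∀ k, h k ∈ G) ∧ (⋂ k, h k '' X') = ∅ := by
  classical
  rintro X' ⟨g0, hg0, hX'sub⟩
  by_contra hno
  push_neg at hno
  -- the σ-filter generated by countable intersections of `G`-translates of `X'`
  let Filt : Set E → Prop := fun A => ∃ h : ℕ → Equiv.Perm E,
    (∀ k, h k ∈ G) ∧ (⋂ k, h k '' X') ⊆ A
  have filt_mono : ∀ {A B : Set E}, A ⊆ B → Filt A → Filt B := by
    rintro A B hAB ⟨h, hh, hs⟩
    exact ⟨h, hh, hs.trans hAB⟩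
  have filt_univ : Filt Set.univ :=
    ⟨fun _ => 1, fun _ => one_mem G, Set.subset_univ _⟩
  have filt_iInter : ∀ (A : ℕ → Set E), (∀ i, Filt (A i)) → Filt (⋂ i, A i) := by
    intro A hA
    choose h hh hs using hA
    refine ⟨fun n => h (Nat.unpair n).1 (Nat.unpair n).2, fun n => hh _ _, ?_⟩
    intro x hx
    refine Set.mem_iInter.mpr (fun i => hs i ?_)
    refine Set.mem_iInter.mpr (fun k => ?_)
    have := Set.mem_iInter.mp hx (Nat.pair i k)
    simpa [Nat.unpair_pair] using this
  have filt_inter : ∀ {A B : Set E}, Filt A → Filt B → Filt (A ∩ B) := by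
    intro A B hA hB
    have heq : (⋂ i : ℕ, if i = 0 then A else B) = A ∩ B := by
      ext x
      simp only [Set.mem_iInter, Set.mem_inter_iff]
      constructor
      · intro h
        exact ⟨by simpa using h 0, by simpa using h 1⟩
      · rintro ⟨ha, hb⟩ i
        by_cases h : i = 0 <;> simp [h, ha, hb]
    have := filt_iInter (fun i => if i = 0 then A else B)
      (fun i => by
        by_cases h : i = 0
        · simpa [h] using hA
        · simpa [h] using hB)
    rwa [heq] at this
  have filt_proper : ¬ Filt ∅ := by
    rintro ⟨h, hh, hs⟩
    exact (hno h hh).ne_empty (Set.subset_empty_iff.mp hs)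
  have filt_self : Filt X' :=
    ⟨fun _ => 1, fun _ => one_mem G, by
      intro x hx
      simpa using Set.mem_iInter.mp hx 0⟩
  have filt_image : ∀ g : Equiv.Perm E, g ∈ G → ∀ A, Filt A → Filt (g '' A) := by
    rintro g hg A ⟨h, hh, hs⟩
    refine ⟨fun k => g * h k, fun k => mul_mem hg (hh k), ?_⟩
    have : (⋂ k, (g * h k) '' X') = g '' ⋂ k, h k '' X' := by
      rw [Set.image_iInter g.bijective]
      exact iInter_congr (fun k => image_mul g (h k) X')
    rw [this]
    exact Set.image_mono hs
  -- the σ-algebra and the two-valued measure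
  let m0 : MeasurableSpace E :=
    { MeasurableSet' := fun A => Filt A ∨ Filt Aᶜ
      measurableSet_empty := Or.inr (by rw [Set.compl_empty]; exact filt_univ)
      measurableSet_compl := by
        rintro A (hA | hA)
        · exact Or.inr (by rwa [compl_compl])
        · exact Or.inl hA
      measurableSet_iUnion := by
        intro A hA
        by_cases hex : ∃ i, Filt (A i)
        · obtain ⟨i, hi⟩ := hex
          exact Or.inl (filt_mono (Set.subset_iUnion A i) hi)
        · push_neg at hex
          refine Or.inr ?_
          rw [Set.compl_iUnion]
          exact filt_iInter _ (fun i => (hA i).resolve_left (hex i)) }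
  let f0 : ∀ s : Set E, MeasurableSet[m0] s → ENNReal := fun s _ =>
    if Filt s then 1 else 0
  have h00 : ∀ (h : MeasurableSet[m0] (∅ : Set E)), f0 ∅ h = 0 :=
    fun _ => if_neg filt_proper
  have hadd0 : ∀ ⦃Bf : ℕ → Set E⦄ (h : ∀ i, MeasurableSet[m0] (Bf i)),
      Pairwise (Function.onFun Disjoint Bf) →
      ∀ (hU : MeasurableSet[m0] (⋃ i, Bf i)),
        f0 (⋃ i, Bf i) hU = ∑' i, f0 (Bf i) (h i) := by
    intro Bf h hd hU
    by_cases hex : ∃ i0, Filt (Bf i0)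
    · obtain ⟨i0, hi0⟩ := hex
      have huniq : ∀ i, i ≠ i0 → f0 (Bf i) (h i) = 0 := by
        intro i hii0
        refine if_neg (fun hFi => ?_)
        have hint := filt_inter hFi hi0
        rw [Set.disjoint_iff_inter_eq_empty.mp (hd hii0)] at hint
        exact filt_proper hint
      rw [tsum_eq_single i0 huniq]
      have h1 : f0 (⋃ i, Bf i) hU = 1 :=
        if_pos (filt_mono (Set.subset_iUnion Bf i0) hi0)
      have h2 : f0 (Bf i0) (h i0) = 1 := if_pos hi0
      rw [h1, h2]
    · push_neg at hex
      have hL : f0 (⋃ i, Bf i) hU = 0 := by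
        refine if_neg (fun hFU => ?_)
        have hcompl : Filt (⋂ i, (Bf i)ᶜ) :=
          filt_iInter _ (fun i => (h i).resolve_left (hex i))
        have hint := filt_inter hFU hcompl
        have hE : (⋃ i, Bf i) ∩ (⋂ i, (Bf i)ᶜ) = ∅ := by
          refine Set.eq_empty_iff_forall_notMem.mpr ?_
          rintro x ⟨hxU, hxI⟩
          obtain ⟨i, hi⟩ := Set.mem_iUnion.mp hxU
          exact (Set.mem_iInter.mp hxI i) hi
        rw [hE] at hint
        exact filt_proper hint
      rw [hL]
      symm
      simp only [f0]
      rw [tsum_congr (fun i => if_neg (hex i))]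
      exact tsum_zero
  set μ0 : @Measure E m0 := @Measure.ofMeasurable E m0 f0 (h00 (@MeasurableSet.empty E m0))
    (fun Bf h hd => hadd0 h hd (MeasurableSet.iUnion h)) with hμ0def
  have hμ0 : ∀ (s : Set E) (hs : MeasurableSet[m0] s),
      μ0 s = if Filt s then 1 else 0 := by
    intro s hs
    rw [hμ0def]
    exact Measure.ofMeasurable_apply s hs
  have hInv : IsInvariantSigmaFiniteMeasure G m0 μ0 := by
    refine ⟨?_, ⟨fun _ => Set.univ, fun k => ⟨Or.inl filt_univ, ?_⟩,
      Set.iUnion_const _⟩, ?_⟩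
    · intro hz
      have huniv : μ0 Set.univ = 1 := by
        rw [hμ0 _ (Or.inl filt_univ)]; exact if_pos filt_univ
      rw [hz] at huniv
      simp at huniv
    · rw [hμ0 _ (Or.inl filt_univ), if_pos filt_univ]
      exact ENNReal.one_ne_top
    · intro g hg A hA
      have hmeas : MeasurableSet[m0] (g '' A) := by
        rcases hA with hF | hFc
        · exact Or.inl (filt_image g hg A hF)
        · refine Or.inr ?_
          rw [← Set.image_compl_eq g.bijective]
          exact filt_image g hg _ hFc
      refine ⟨hmeas, ?_⟩
      rw [hμ0 _ hmeas, hμ0 _ hA]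
      have hiff : Filt (g '' A) ↔ Filt A := by
        constructor
        · intro hF
          have := filt_image g⁻¹ (inv_mem hg) _ hF
          rwa [inv_image_image] at this
        · exact filt_image g hg A
      rw [if_congr hiff rfl rfl]
  obtain ⟨m', ν, hle, hXmeas, hext, hX0, hinv'⟩ := hneg m0 μ0 hInv
  have hX'meas0 : MeasurableSet[m0] X' := Or.inl filt_self
  have hν1 : ν X' = 1 := by
    rw [hext X' hX'meas0, hμ0 _ hX'meas0]
    exact if_pos filt_self
  have hν0 : ν X' ≤ 0 := by
    calc ν X' ≤ ν (⋃ k, g0 k '' X) := measure_mono hX'sub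
      _ ≤ ∑' k, ν (g0 k '' X) := measure_iUnion_le (μ := ν) _
      _ = 0 := by
          have hz : ∀ k, ν (g0 k '' X) = 0 := fun k => by
            rw [(hinv' (g0 k) (hg0 k) X hXmeas).2, hX0]
          simp [hz]
  rw [hν1] at hν0
  exact absurd hν0 (by simp)

end Stmt15Aux

/-- if the group `G` of bijections of `E` contains an uncountable
subgroup acting freely on `E`, then `X ⊆ E` is `G`-absolutely negligible iff for
every countable `G`-configuration `X'` of `X` there is a sequence `(h_k)` in `G`
with `⋂ k, h_k(X') = ∅`. -/
theorem stmt15 (G : Subgroup (Equiv.Perm E))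
    (H : Subgroup (Equiv.Perm E)) (hHG : H ≤ G)
    (hH : Cardinal.aleph0 < Cardinal.mk H)
    (hfree : ∀ h : Equiv.Perm E, h ∈ H → h ≠ 1 → ∀ x : E, h x ≠ x)
    (X : Set E) :
    IsAbsolutelyNegligible G X ↔
      ∀ X' : Set E, IsCountableConfiguration G X X' →
        ∃ h : ℕ → Equiv.Perm E, (∀ k, h k ∈ G) ∧ (⋂ k, h k '' X') = ∅ := by
  exact ⟨Stmt15Aux.necessity G X, Stmt15Aux.sufficiency G X⟩
end
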